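/- arXiv:0912.1973 — 10 statements merged into one kernel-verified Lean document; each statement's English description precedes it below -/
import Mathlib

section
/- Let u : ℝ → ℝ be continuously differentiable with u'(y) > 0 for all y. Fix x ∈ ℝ, γ > 0 and c > 0, and for each positive integer n set x_k^{(n)} = x + kγ/n for k = 0, 1, …, n. Then lim_{n→∞} Σ_{k=0}^{n−1} log[(u(x_k^{(n)}) − u(x_k^{(n)} − c)) / (u(x_{k+1}^{(n)}) − u(x_k^{(n)} − c))] = −∫_x^{x+γ} u'(y) / (u(y) − u(y − c)) dy. -/
open Real MeasureTheory intervalIntegral Filter Finset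

set_option maxHeartbeats 1000000

/-- The limit of the log-product of down-crossing-avoidance probabilities over the
partition `x_k = x + kγ/n` (lower-bound version from the proof of Theorem 1(i)). -/
theorem log_product_limit_lower
    (u : ℝ → ℝ) (hu : ContDiff ℝ 1 u) (hu' : ∀ y, 0 < deriv u y)
    (x γ c : ℝ) (hγ : 0 < γ) (hc : 0 < c) :
    Tendsto
      (fun n : ℕ => ∑ k ∈ Finset.range n,
        Real.log ((u (x + (k : ℝ) * γ / (n : ℝ)) - u (x + (k : ℝ) * γ / (n : ℝ) - c)) /
          (u (x + ((k : ℝ) + 1) * γ / (n : ℝ)) - u (x + (k : ℝ) * γ / (n : ℝ) - c))))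
      atTop
      (nhds (-∫ y in x..(x + γ), deriv u y / (u y - u (y - c)))) := by
  have hud : Differentiable ℝ u := hu.differentiable one_ne_zero
  have hmono : StrictMono u := strictMono_of_deriv_pos hu'
  have hu'c : Continuous (deriv u) := hu.continuous_deriv le_rfl
  have huc : Continuous u := hud.continuous
  have hpos : ∀ t : ℝ, 0 < u t - u (t - c) := fun t => sub_pos.2 (hmono (by linarith))
  set f : ℝ → ℝ := fun t => deriv u t / (u t - u (t - c)) with hf
  have hgc : Continuous (fun t => u t - u (t - c)) :=
    huc.sub (huc.comp (continuous_id.sub continuous_const))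
  have hfc : Continuous f := hu'c.div hgc (fun t => (hpos t).ne')
  -- minimum of the denominator on [x, x+γ]
  obtain ⟨t₀, ht₀, hmin⟩ := isCompact_Icc.exists_isMinOn (Set.nonempty_Icc.2 (by linarith))
    (hgc.continuousOn : ContinuousOn (fun t => u t - u (t - c)) (Set.Icc x (x + γ)))
  set m : ℝ := u t₀ - u (t₀ - c) with hm_def
  have hm0 : 0 < m := hpos t₀
  have hm : ∀ t ∈ Set.Icc x (x + γ), m ≤ u t - u (t - c) := fun t ht => hmin ht
  -- bound on the derivative on [x, x+γ]
  obtain ⟨M₀, hM₀⟩ := isCompact_Icc.exists_bound_of_continuousOn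
    (hu'c.continuousOn : ContinuousOn (deriv u) (Set.Icc x (x + γ)))
  set M : ℝ := M₀ + 1 with hM_def
  have hM0 : 0 < M := by
    have := hM₀ x (Set.left_mem_Icc.2 (by linarith))
    have h0 : (0:ℝ) ≤ M₀ := le_trans (norm_nonneg _) this
    linarith
  have hM : ∀ t ∈ Set.Icc x (x + γ), deriv u t ≤ M := by
    intro t ht
    have := hM₀ t ht
    rw [Real.norm_eq_abs] at this
    have := le_trans (le_abs_self _) this
    linarith
  -- uniform continuity of u on [x - c, x + γ]
  have hucont : UniformContinuousOn u (Set.Icc (x - c) (x + γ)) :=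
    isCompact_Icc.uniformContinuousOn_of_continuous huc.continuousOn
  rw [Metric.tendsto_atTop]
  intro ε hε
  set ε' : ℝ := ε * m ^ 2 / (2 * M * γ) with hε'_def
  have hε' : 0 < ε' := by positivity
  obtain ⟨δ, hδ0, hδ⟩ := Metric.uniformContinuousOn_iff.1 hucont ε' hε'
  obtain ⟨N, hN⟩ := exists_nat_gt (γ / δ)
  refine ⟨max N 1, fun n hn => ?_⟩
  have hn1 : 1 ≤ n := le_trans (le_max_right N 1) hn
  have hnN : (N : ℝ) ≤ n := Nat.cast_le.2 (le_trans (le_max_left N 1) hn)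
  have hnpos : (0:ℝ) < n := by exact_mod_cast hn1
  have hnne : (n:ℝ) ≠ 0 := hnpos.ne'
  have hδn : γ / n < δ := by
    rw [div_lt_iff₀ hnpos]
    have : γ / δ < (n:ℝ) := lt_of_lt_of_le hN hnN
    rw [div_lt_iff₀ hδ0] at this
    linarith
  -- the partition points
  set a : ℕ → ℝ := fun k => x + (k : ℝ) * γ / n with ha_def
  have ha0 : a 0 = x := by simp [ha_def]
  have han : a n = x + γ := by simp only [ha_def]; rw [mul_div_cancel_left₀ γ hnne]
  have hastep : ∀ k : ℕ, a (k + 1) = a k + γ / n := by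
    intro k; simp only [ha_def]; push_cast; ring
  have hamono : ∀ k : ℕ, a k < a (k + 1) := by
    intro k; rw [hastep]; have : 0 < γ / n := by positivity
    linarith
  have haIcc : ∀ k : ℕ, k ≤ n → a k ∈ Set.Icc x (x + γ) := by
    intro k hk
    constructor
    · have : (0:ℝ) ≤ (k:ℝ) * γ / n := by positivity
      simp only [ha_def]; linarith
    · simp only [ha_def]
      have hkn : (k:ℝ) ≤ n := Nat.cast_le.2 hk
      have : (k:ℝ) * γ / n ≤ γ := by
        rw [div_le_iff₀ hnpos]
        nlinarith
      linarith
  -- per-interval FTC identity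
  have key : ∀ k, k < n →
      Real.log ((u (a k) - u (a k - c)) / (u (a (k + 1)) - u (a k - c))) =
        -∫ t in a k..a (k + 1), deriv u t / (u t - u (a k - c)) := by
    intro k _
    set p : ℝ := u (a k - c) with hp
    have hlt : ∀ t ∈ Set.uIcc (a k) (a (k + 1)), 0 < u t - p := by
      intro t ht
      rw [Set.uIcc_of_le (hamono k).le] at ht
      exact sub_pos.2 (hmono (lt_of_lt_of_le (by linarith) ht.1))
    have hderiv : ∀ t ∈ Set.uIcc (a k) (a (k + 1)),
        HasDerivAt (fun s => Real.log (u s - p)) (deriv u t / (u t - p)) t := by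
      intro t ht
      have h1 : HasDerivAt (fun s => u s - p) (deriv u t) t := ((hud t).hasDerivAt).sub_const p
      have h2 := (Real.hasDerivAt_log (hlt t ht).ne').comp t h1
      simpa [div_eq_inv_mul, Function.comp_def] using h2
    have hint : IntervalIntegrable (fun t => deriv u t / (u t - p)) volume (a k) (a (k + 1)) := by
      apply ContinuousOn.intervalIntegrable
      exact ContinuousOn.div hu'c.continuousOn ((huc.sub continuous_const).continuousOn)
        (fun t ht => (hlt t ht).ne')
    rw [intervalIntegral.integral_eq_sub_of_hasDerivAt hderiv hint]
    have h1 : 0 < u (a k) - p := hlt _ Set.left_mem_uIcc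
    have h2 : 0 < u (a (k + 1)) - p := hlt _ Set.right_mem_uIcc
    rw [Real.log_div h1.ne' h2.ne']
    ring
  -- rewrite the sum
  have hS : (∑ k ∈ Finset.range n,
        Real.log ((u (x + (k : ℝ) * γ / (n : ℝ)) - u (x + (k : ℝ) * γ / (n : ℝ) - c)) /
          (u (x + ((k : ℝ) + 1) * γ / (n : ℝ)) - u (x + (k : ℝ) * γ / (n : ℝ) - c)))) =
      ∑ k ∈ Finset.range n,
        -∫ t in a k..a (k + 1), deriv u t / (u t - u (a k - c)) := by
    refine Finset.sum_congr rfl fun k hk => ?_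
    have hk' := Finset.mem_range.1 hk
    have h1 : x + ((k : ℝ) + 1) * γ / n = a (k + 1) := by
      simp only [ha_def]; push_cast; ring
    have h2 : x + (k : ℝ) * γ / n = a k := rfl
    rw [h1, h2]
    exact key k hk'
  -- split the integral
  have hintf : ∀ k : ℕ, IntervalIntegrable f volume (a k) (a (k + 1)) :=
    fun k => hfc.intervalIntegrable _ _
  have hsplit : (∫ y in x..(x + γ), deriv u y / (u y - u (y - c))) =
      ∑ k ∈ Finset.range n, ∫ t in a k..a (k + 1), f t := by
    have := intervalIntegral.sum_integral_adjacent_intervals (f := f) (a := a) (n := n)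
      (fun k _ => hintf k)
    rw [ha0, han] at this
    exact this.symm
  rw [Real.dist_eq, hS, hsplit]
  have habs : (∑ k ∈ Finset.range n,
        -∫ t in a k..a (k + 1), deriv u t / (u t - u (a k - c))) -
      -∑ k ∈ Finset.range n, ∫ t in a k..a (k + 1), f t =
      ∑ k ∈ Finset.range n, ((∫ t in a k..a (k + 1), f t) -
        ∫ t in a k..a (k + 1), deriv u t / (u t - u (a k - c))) := by
    rw [Finset.sum_sub_distrib, Finset.sum_neg_distrib]
    ring
  rw [habs]
  -- bound each term
  set C0 : ℝ := M * ε' / (m * m) with hC0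
  have hterm : ∀ k, k < n →
      |(∫ t in a k..a (k + 1), f t) -
        ∫ t in a k..a (k + 1), deriv u t / (u t - u (a k - c))| ≤ C0 * (γ / n) := by
    intro k hk
    set p : ℝ := u (a k - c) with hp
    have hlt : ∀ t ∈ Set.uIcc (a k) (a (k + 1)), 0 < u t - p := by
      intro t ht
      rw [Set.uIcc_of_le (hamono k).le] at ht
      exact sub_pos.2 (hmono (lt_of_lt_of_le (by linarith) ht.1))
    have hintg : IntervalIntegrable (fun t => deriv u t / (u t - p)) volume (a k) (a (k + 1)) := by
      apply ContinuousOn.intervalIntegrable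
      exact ContinuousOn.div hu'c.continuousOn ((huc.sub continuous_const).continuousOn)
        (fun t ht => (hlt t ht).ne')
    rw [← intervalIntegral.integral_sub (hintf k) hintg]
    have hbound : ∀ t ∈ Set.uIoc (a k) (a (k + 1)),
        ‖f t - deriv u t / (u t - p)‖ ≤ C0 := by
      intro t ht
      rw [Set.uIoc_of_le (hamono k).le] at ht
      have htk : a k ≤ t := ht.1.le
      have htk1 : t ≤ a (k + 1) := ht.2
      have htx : t ∈ Set.Icc x (x + γ) := by
        have h1 := (haIcc k hk.le).1
        have h2 := (haIcc (k + 1) hk).2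
        exact ⟨le_trans h1 htk, le_trans htk1 h2⟩
      set A : ℝ := deriv u t with hA
      set B : ℝ := u t - u (t - c) with hB
      set C' : ℝ := u t - p with hC'
      have hBm : m ≤ B := hm t htx
      have hBC : B ≤ C' := by
        have : u (a k - c) ≤ u (t - c) := hmono.monotone (by linarith)
        simp only [hB, hC', hp]; linarith
      have hCm : m ≤ C' := le_trans hBm hBC
      have hA0 : 0 < A := hu' t
      have hAM : A ≤ M := hM t htx
      have hd : |u (t - c) - p| ≤ ε' := by
        have h1 : t - c ∈ Set.Icc (x - c) (x + γ) := ⟨by linarith [htx.1], by linarith [htx.2]⟩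
        have h2 : a k - c ∈ Set.Icc (x - c) (x + γ) := by
          have := haIcc k hk.le
          exact ⟨by linarith [this.1], by linarith [this.2]⟩
        have hdist : dist (t - c) (a k - c) < δ := by
          rw [Real.dist_eq]
          have hstep := hastep k
          have habs2 : |t - c - (a k - c)| = t - a k := by
            rw [abs_of_nonneg (by linarith)]; ring
          rw [habs2]
          have h3 : t - a k ≤ γ / (n:ℝ) := by
            rw [hstep] at htk1; linarith
          exact lt_of_le_of_lt h3 hδn
        have := hδ _ h1 _ h2 hdist
        rw [Real.dist_eq] at this
        exact this.le
      have heq : f t - A / C' = A * (u (t - c) - p) / (B * C') := by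
        have hB0 : B ≠ 0 := (lt_of_lt_of_le hm0 hBm).ne'
        have hC0' : C' ≠ 0 := (lt_of_lt_of_le hm0 hCm).ne'
        simp only [hf, ← hA, ← hB, ← hC', hp]
        field_simp
        ring
      rw [Real.norm_eq_abs, heq, abs_div, abs_mul, abs_of_pos hA0,
        abs_of_pos (by nlinarith : (0:ℝ) < B * C')]
      rw [hC0]
      apply div_le_div₀ (by positivity) _ (by positivity) (by nlinarith)
      exact mul_le_mul hAM hd (abs_nonneg _) hM0.le
    have := intervalIntegral.norm_integral_le_of_norm_le_const hbound
    rw [Real.norm_eq_abs] at this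
    have hab : |a (k + 1) - a k| = γ / n := by
      rw [hastep k]
      have he : a k + γ / (n:ℝ) - a k = γ / n := by ring
      rw [he, abs_of_nonneg (by positivity : (0:ℝ) ≤ γ / (n:ℝ))]
    calc |∫ t in a k..a (k + 1), (f t - deriv u t / (u t - p))| ≤ C0 * |a (k + 1) - a k| :=
          this
      _ = C0 * (γ / n) := by rw [hab]
  calc |∑ k ∈ Finset.range n, ((∫ t in a k..a (k + 1), f t) -
          ∫ t in a k..a (k + 1), deriv u t / (u t - u (a k - c)))|
      ≤ ∑ k ∈ Finset.range n, |(∫ t in a k..a (k + 1), f t) -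
          ∫ t in a k..a (k + 1), deriv u t / (u t - u (a k - c))| :=
        Finset.abs_sum_le_sum_abs _ _
    _ ≤ ∑ _k ∈ Finset.range n, C0 * (γ / n) :=
        Finset.sum_le_sum fun k hk => hterm k (Finset.mem_range.1 hk)
    _ = n * (C0 * (γ / n)) := by rw [Finset.sum_const, Finset.card_range, nsmul_eq_mul]
    _ = C0 * γ := by field_simp
    _ = ε / 2 := by
        rw [hC0, hε'_def]
        field_simp
    _ < ε := by linarith
end

section
/- Let u : ℝ → ℝ be continuously differentiable with u'(y) > 0 for all y. Fix x ∈ ℝ, γ > 0 and c > 0, and for each positive integer n set x_k^{(n)} = x + kγ/n for k = 0, 1, …, n. Then lim_{n→∞} Σ_{k=0}^{n−1} log[(u(x_k^{(n)}) − u(x_{k+1}^{(n)} − c)) / (u(x_{k+1}^{(n)}) − u(x_{k+1}^{(n)} − c))] = −∫_x^{x+γ} u'(y) / (u(y) − u(y − c)) dy. -/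
open Real MeasureTheory intervalIntegral Filter Finset

private lemma ftc_log (u : ℝ → ℝ) (hu : ContDiff ℝ 1 u)
    (m a b : ℝ) (hab : a ≤ b) (hm : ∀ y ∈ Set.Icc a b, m < u y) :
    ∫ y in a..b, deriv u y / (u y - m)
      = Real.log (u b - m) - Real.log (u a - m) := by
  have hud : Differentiable ℝ u := hu.differentiable one_ne_zero
  have hdc : Continuous (deriv u) := hu.continuous_deriv le_rfl
  have h1 : ∀ y ∈ Set.uIcc a b,
      HasDerivAt (fun t => Real.log (u t - m)) (deriv u y / (u y - m)) y := by
    intro y hy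
    rw [Set.uIcc_of_le hab] at hy
    have hne : u y - m ≠ 0 := by have := hm y hy; intro h; linarith [sub_eq_zero.mp h]
    have := (((hud y).hasDerivAt).sub_const m).log hne
    simpa using this
  have h2 : IntervalIntegrable (fun y => deriv u y / (u y - m)) volume a b := by
    apply ContinuousOn.intervalIntegrable
    apply ContinuousOn.div hdc.continuousOn
      ((hud.continuous.sub continuous_const).continuousOn)
    intro y hy
    rw [Set.uIcc_of_le hab] at hy
    have := hm y hy; intro h; linarith [sub_eq_zero.mp h]
  simpa using intervalIntegral.integral_eq_sub_of_hasDerivAt h1 h2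

private lemma lip_est (u : ℝ → ℝ) (hu : ContDiff ℝ 1 u) (M p q s t : ℝ)
    (hM : ∀ y ∈ Set.Icc p q, deriv u y ≤ M)
    (hps : p ≤ s) (hst : s ≤ t) (htq : t ≤ q) :
    u t - u s ≤ M * (t - s) := by
  have hud : Differentiable ℝ u := hu.differentiable one_ne_zero
  have hdc : Continuous (deriv u) := hu.continuous_deriv le_rfl
  have h1 : ∫ y in s..t, deriv u y = u t - u s :=
    intervalIntegral.integral_deriv_eq_sub (fun y _ => hud y) (hdc.intervalIntegrable s t)
  rw [← h1]
  calc ∫ y in s..t, deriv u y ≤ ∫ _ in s..t, M := by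
        apply intervalIntegral.integral_mono_on hst (hdc.intervalIntegrable s t)
          intervalIntegrable_const
        intro y hy; exact hM y ⟨le_trans hps hy.1, le_trans hy.2 htq⟩
    _ = M * (t - s) := by simp [intervalIntegral.integral_const]; ring

/-- The limit of the log-product of down-crossing-avoidance probabilities over the
partition `x_k = x + kγ/n` (upper-bound version from the proof of Theorem 1(i)). -/
theorem log_product_limit_upper
    (u : ℝ → ℝ) (hu : ContDiff ℝ 1 u) (hu' : ∀ y, 0 < deriv u y)
    (x γ c : ℝ) (hγ : 0 < γ) (hc : 0 < c) :
    Tendsto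
      (fun n : ℕ => ∑ k ∈ Finset.range n,
        Real.log ((u (x + (k : ℝ) * γ / (n : ℝ)) - u (x + ((k : ℝ) + 1) * γ / (n : ℝ) - c)) /
          (u (x + ((k : ℝ) + 1) * γ / (n : ℝ)) - u (x + ((k : ℝ) + 1) * γ / (n : ℝ) - c))))
      atTop
      (nhds (-∫ y in x..(x + γ), deriv u y / (u y - u (y - c)))) := by
  have hud : Differentiable ℝ u := hu.differentiable one_ne_zero
  have hcont : Continuous u := hud.continuous
  have hdc : Continuous (deriv u) := hu.continuous_deriv le_rfl
  have hmono : StrictMono u := strictMono_of_deriv_pos hu'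
  set g : ℝ → ℝ := fun y => deriv u y / (u y - u (y - c)) with hgdef
  set I : ℝ := ∫ y in x..(x + γ), g y with hIdef
  have hgpos : ∀ y : ℝ, 0 < u y - u (y - c) := fun y => sub_pos.2 (hmono (by linarith))
  have hgcont : Continuous g := by
    apply hdc.div (hcont.sub (hcont.comp (continuous_id.sub continuous_const)))
    exact fun y => (hgpos y).ne'
  -- M : max of deriv u on the relevant compact
  obtain ⟨yM, hyMmem, hyM2⟩ := (isCompact_Icc (a := x - c) (b := x + γ)).exists_isMaxOn
      ⟨x, by constructor <;> linarith⟩ hdc.continuousOn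
  obtain ⟨M, hMdef⟩ : ∃ t : ℝ, t = deriv u yM := ⟨_, rfl⟩
  have hM0 : 0 < M := hMdef ▸ hu' yM
  have hM : ∀ y ∈ Set.Icc (x - c) (x + γ), deriv u y ≤ M := fun y hy => hMdef ▸ hyM2 hy
  -- δ : min of u y - u (y - c) on [x, x+γ]
  obtain ⟨y1, hy1mem, hy1m⟩ := (isCompact_Icc (a := x) (b := x + γ)).exists_isMinOn
      ⟨x, by constructor <;> linarith⟩
      (((hcont.sub (hcont.comp (continuous_id.sub continuous_const)))).continuousOn
        (f := fun y => u y - u (y - c)))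
  obtain ⟨δ, hδdef⟩ : ∃ t : ℝ, t = u y1 - u (y1 - c) := ⟨_, rfl⟩
  have hδ0 : 0 < δ := hδdef ▸ hgpos y1
  have hδ : ∀ y ∈ Set.Icc x (x + γ), δ ≤ u y - u (y - c) := fun y hy => hδdef ▸ hy1m hy
  -- δ' : min of u y - u (y - c/2) on [x, x+γ]
  obtain ⟨y2, hy2mem, hy2m⟩ := (isCompact_Icc (a := x) (b := x + γ)).exists_isMinOn
      ⟨x, by constructor <;> linarith⟩
      (((hcont.sub (hcont.comp (continuous_id.sub continuous_const)))).continuousOn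
        (f := fun y => u y - u (y - c / 2)))
  obtain ⟨δ', hδ'def⟩ : ∃ t : ℝ, t = u y2 - u (y2 - c / 2) := ⟨_, rfl⟩
  have hδ'0 : 0 < δ' := hδ'def ▸ sub_pos.2 (hmono (by linarith))
  have hδ' : ∀ y ∈ Set.Icc x (x + γ), δ' ≤ u y - u (y - c / 2) := fun y hy => hδ'def ▸ hy2m hy
  obtain ⟨C, hCdef⟩ : ∃ t : ℝ, t = M ^ 2 * γ ^ 2 / (δ * δ') := ⟨_, rfl⟩
  -- key estimate
  have key : ∀ n : ℕ, 1 ≤ n → γ / n ≤ c / 2 →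
      ‖(∑ k ∈ Finset.range n,
        Real.log ((u (x + (k : ℝ) * γ / (n : ℝ)) - u (x + ((k : ℝ) + 1) * γ / (n : ℝ) - c)) /
          (u (x + ((k : ℝ) + 1) * γ / (n : ℝ)) - u (x + ((k : ℝ) + 1) * γ / (n : ℝ) - c)))) -
        (-I)‖ ≤ C / n := by
    intro n hn1 hn2
    have hn0 : (0 : ℝ) < n := by exact_mod_cast hn1
    obtain ⟨h, hhdef⟩ : ∃ t : ℝ, t = γ / n := ⟨_, rfl⟩
    have hh0 : 0 < h := by rw [hhdef]; positivity
    have hhc : h ≤ c / 2 := by rw [hhdef]; exact hn2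
    obtain ⟨a, hadef⟩ : ∃ t : ℕ → ℝ, t = fun k : ℕ => x + k * h := ⟨_, rfl⟩
    have haval : ∀ k : ℕ, a k = x + k * h := fun k => by rw [hadef]
    have ha0 : a 0 = x := by rw [haval]; simp
    have han : a n = x + γ := by
      rw [haval, hhdef]; field_simp
    have hstep : ∀ k : ℕ, a (k + 1) = a k + h := by
      intro k; rw [haval, haval]; push_cast; ring
    have hmem : ∀ k : ℕ, k ≤ n → a k ∈ Set.Icc x (x + γ) := by
      intro k hk
      have hkn : (k : ℝ) ≤ n := by exact_mod_cast hk
      have hnh : (n : ℝ) * h = γ := by rw [hhdef]; field_simp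
      rw [haval]
      constructor
      · nlinarith
      · nlinarith
    -- rewrite the sum
    have hsum_eq : (∑ k ∈ Finset.range n,
        Real.log ((u (x + (k : ℝ) * γ / (n : ℝ)) - u (x + ((k : ℝ) + 1) * γ / (n : ℝ) - c)) /
          (u (x + ((k : ℝ) + 1) * γ / (n : ℝ)) - u (x + ((k : ℝ) + 1) * γ / (n : ℝ) - c))))
        = ∑ k ∈ Finset.range n,
          Real.log ((u (a k) - u (a (k + 1) - c)) / (u (a (k + 1)) - u (a (k + 1) - c))) := by
      apply Finset.sum_congr rfl
      intro k _
      have e1 : x + (k : ℝ) * γ / (n : ℝ) = a k := by rw [haval, hhdef]; ring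
      have e2 : x + ((k : ℝ) + 1) * γ / (n : ℝ) = a (k + 1) := by
        rw [haval, hhdef]; push_cast; ring
      rw [e1, e2]
    rw [hsum_eq]
    -- integral splits
    have hgint : ∀ k < n, IntervalIntegrable g volume (a k) (a (k + 1)) :=
      fun k _ => hgcont.intervalIntegrable _ _
    have hIsplit : ∑ k ∈ Finset.range n, ∫ y in a k..a (k + 1), g y = I := by
      have h2 := intervalIntegral.sum_integral_adjacent_intervals hgint
      rw [ha0, han] at h2
      exact h2
    -- per-term estimate
    have hterm : ∀ k ∈ Finset.range n,
        ‖Real.log ((u (a k) - u (a (k + 1) - c)) / (u (a (k + 1)) - u (a (k + 1) - c)))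
          + ∫ y in a k..a (k + 1), g y‖ ≤ M * ((M * h) / (δ' * δ)) * h := by
      intro k hk
      rw [Finset.mem_range] at hk
      have hk1 : a k ∈ Set.Icc x (x + γ) := hmem k hk.le
      have hk2 : a (k + 1) ∈ Set.Icc x (x + γ) := hmem (k + 1) hk
      have hka : a (k + 1) = a k + h := hstep k
      have hle : a k ≤ a (k + 1) := by linarith
      obtain ⟨m, hmdef⟩ : ∃ t : ℝ, t = u (a (k + 1) - c) := ⟨_, rfl⟩
      have hmlt : ∀ y ∈ Set.Icc (a k) (a (k + 1)), m < u y := by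
        intro y hy
        rw [hmdef]
        apply hmono
        have := hy.1
        linarith
      have pos1 : 0 < u (a k) - m := sub_pos.2 (hmlt _ ⟨le_rfl, hle⟩)
      have pos2 : 0 < u (a (k + 1)) - m := sub_pos.2 (hmlt _ ⟨hle, le_rfl⟩)
      have hftc : ∫ y in a k..a (k + 1), deriv u y / (u y - m)
          = Real.log (u (a (k + 1)) - m) - Real.log (u (a k) - m) :=
        ftc_log u hu m _ _ hle hmlt
      have hlog : Real.log ((u (a k) - m) / (u (a (k + 1)) - m))
          = Real.log (u (a k) - m) - Real.log (u (a (k + 1)) - m) :=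
        Real.log_div pos1.ne' pos2.ne'
      have hgkcont : ContinuousOn (fun y => deriv u y / (u y - m))
          (Set.Icc (a k) (a (k + 1))) := by
        apply ContinuousOn.div hdc.continuousOn
          ((hcont.sub continuous_const).continuousOn)
        intro y hy
        have := hmlt y hy; intro hcc; linarith [sub_eq_zero.mp hcc]
      have hgkint : IntervalIntegrable (fun y => deriv u y / (u y - m)) volume
          (a k) (a (k + 1)) := by
        apply ContinuousOn.intervalIntegrable
        rwa [Set.uIcc_of_le hle]
      have hcomb : Real.log ((u (a k) - m) / (u (a (k + 1)) - m))
          + ∫ y in a k..a (k + 1), g y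
          = ∫ y in a k..a (k + 1), (g y - deriv u y / (u y - m)) := by
        rw [intervalIntegral.integral_sub (hgcont.intervalIntegrable _ _) hgkint, hftc, hlog]
        ring
      rw [← hmdef, hcomb]
      have hb : ∀ y ∈ Set.uIoc (a k) (a (k + 1)),
          ‖g y - deriv u y / (u y - m)‖ ≤ M * ((M * h) / (δ' * δ)) := by
        intro y hy
        rw [Set.uIoc_of_le hle] at hy
        have hyI : y ∈ Set.Icc x (x + γ) := ⟨le_trans hk1.1 hy.1.le, le_trans hy.2 hk2.2⟩
        have hd1 : δ ≤ u y - u (y - c) := hδ y hyI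
        have hyk1 : y ≤ a (k + 1) := hy.2
        have hyk0 : a k ≤ y := hy.1.le
        have hmuy : u (y - c) ≤ m := by
          have := hmono.monotone (show y - c ≤ a (k + 1) - c by linarith)
          linarith [hmdef]
        have hd2 : δ' ≤ u y - m := by
          have h1 : a (k + 1) - c ≤ y - c / 2 := by linarith
          have h2 := hmono.monotone h1
          have h3 := hδ' y hyI
          linarith [hmdef]
        have hnum : m - u (y - c) ≤ M * h := by
          have h4 := lip_est u hu M (x - c) (x + γ) (y - c) (a (k + 1) - c) hM
            (by linarith [hyI.1]) (by linarith) (by linarith [hk2.2, hc])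
          have h2 : a (k + 1) - c - (y - c) ≤ h := by linarith
          have h5 := mul_le_mul_of_nonneg_left h2 hM0.le
          linarith [hmdef]
        have hid : g y - deriv u y / (u y - m)
            = -(deriv u y * ((m - u (y - c)) / ((u y - m) * (u y - u (y - c))))) := by
          simp only [hgdef]
          have n1 : u y - u (y - c) ≠ 0 := (hgpos y).ne'
          have n2 : u y - m ≠ 0 := (show (0:ℝ) < u y - m by linarith).ne'
          field_simp
          ring
        rw [hid, norm_neg]
        have hnn : 0 ≤ deriv u y * ((m - u (y - c)) / ((u y - m) * (u y - u (y - c)))) := by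
          have := (hu' y).le
          have h1 : 0 ≤ m - u (y - c) := by linarith
          have h2 : 0 < u y - m := by linarith
          have h3 : 0 < u y - u (y - c) := hgpos y
          positivity
        rw [Real.norm_of_nonneg hnn]
        have hMy : deriv u y ≤ M := hM y ⟨by linarith [hyI.1], hyI.2⟩
        have h1 : 0 ≤ m - u (y - c) := by linarith
        have hfrac : (m - u (y - c)) / ((u y - m) * (u y - u (y - c)))
            ≤ (M * h) / (δ' * δ) := by
          apply div_le_div₀ (by positivity) hnum (by positivity)
          apply mul_le_mul hd2 hd1 hδ0.le (by linarith)
        exact mul_le_mul hMy hfrac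
          (div_nonneg h1 (mul_nonneg (by linarith) (by linarith))) hM0.le
      calc ‖∫ y in a k..a (k + 1), (g y - deriv u y / (u y - m))‖
          ≤ M * ((M * h) / (δ' * δ)) * |a (k + 1) - a k| :=
            intervalIntegral.norm_integral_le_of_norm_le_const hb
        _ = M * ((M * h) / (δ' * δ)) * h := by
            rw [hka, show a k + h - a k = h by ring, abs_of_pos hh0]
    -- assemble
    have hassemble : (∑ k ∈ Finset.range n,
        Real.log ((u (a k) - u (a (k + 1) - c)) / (u (a (k + 1)) - u (a (k + 1) - c)))) - (-I)
        = ∑ k ∈ Finset.range n,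
          (Real.log ((u (a k) - u (a (k + 1) - c)) / (u (a (k + 1)) - u (a (k + 1) - c)))
            + ∫ y in a k..a (k + 1), g y) := by
      rw [Finset.sum_add_distrib, hIsplit]; ring
    rw [hassemble]
    refine le_trans (norm_sum_le _ _) ?_
    refine le_trans (Finset.sum_le_sum hterm) ?_
    rw [Finset.sum_const, Finset.card_range, nsmul_eq_mul]
    have : (n : ℝ) * (M * ((M * h) / (δ' * δ)) * h) = C / n := by
      rw [hCdef, hhdef]
      field_simp
    exact le_of_eq this
  -- conclude
  have hev : ∀ᶠ n : ℕ in atTop, (1 ≤ n ∧ γ / n ≤ c / 2) := by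
    have h1 : ∀ᶠ n : ℕ in atTop, 1 ≤ n := eventually_ge_atTop 1
    have h2 : ∀ᶠ n : ℕ in atTop, (2 * γ / c : ℝ) ≤ n := by
      have := tendsto_natCast_atTop_atTop (R := ℝ)
      exact this.eventually_ge_atTop _
    filter_upwards [h1, h2] with n hn1 hn2
    refine ⟨hn1, ?_⟩
    have hn0 : (0 : ℝ) < n := by exact_mod_cast hn1
    rw [div_le_div_iff₀ hn0 (by norm_num : (0:ℝ) < 2)]
    rw [div_le_iff₀ hc] at hn2
    linarith
  have hnorm : ∀ᶠ n : ℕ in atTop,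
      ‖(fun n : ℕ => (∑ k ∈ Finset.range n,
        Real.log ((u (x + (k : ℝ) * γ / (n : ℝ)) - u (x + ((k : ℝ) + 1) * γ / (n : ℝ) - c)) /
          (u (x + ((k : ℝ) + 1) * γ / (n : ℝ)) - u (x + ((k : ℝ) + 1) * γ / (n : ℝ) - c)))) - (-I)) n‖
        ≤ C / n := by
    filter_upwards [hev] with n hn
    exact key n hn.1 hn.2
  have h0 : Tendsto (fun n : ℕ => C / (n : ℝ)) atTop (nhds 0) :=
    tendsto_const_div_atTop_nhds_zero_nat C
  have hlim := squeeze_zero_norm' hnorm h0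
  rw [← tendsto_sub_nhds_zero_iff]
  exact hlim
end

section
/- Let a : ℝ → ℝ be continuous with a > 0, let b₁, b₂ : ℝ → ℝ be locally bounded and measurable with b₁(x) ≤ b₂(x) for all x, and let c > 0. For i = 1, 2 define u_i(x) = ∫₀ˣ exp(−∫₀ʸ (2b_i(z)/a(z)) dz) dy and H(b_i, x) = exp(−∫₀ˣ (2b_i(z)/a(z)) dz) / (u_i(x) − u_i(x − c)). Then H(b₁, x) ≥ H(b₂, x) for every x ∈ ℝ. -/
open Real MeasureTheory intervalIntegral

private lemma g_intervalIntegrable (a b : ℝ → ℝ) (ha_cont : Continuous a)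
    (ha_pos : ∀ x, 0 < a x) (hb_meas : Measurable b)
    (hb_loc : ∀ K : Set ℝ, IsCompact K → ∃ M, ∀ x ∈ K, |b x| ≤ M) :
    ∀ s t : ℝ, IntervalIntegrable (fun z => 2 * b z / a z) volume s t := by
  intro s t
  obtain ⟨M, hM⟩ := hb_loc (Set.uIcc s t) isCompact_uIcc
  obtain ⟨z₀, hz₀, hmin⟩ := isCompact_uIcc.exists_isMinOn (Set.nonempty_uIcc)
    (ha_cont.continuousOn (s := Set.uIcc s t))
  have hm : 0 < a z₀ := ha_pos z₀
  apply IntervalIntegrable.mono_fun' (g := fun _ => 2 * M / a z₀)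
    intervalIntegrable_const
  · exact (((measurable_const.mul hb_meas).div
      (ha_cont.measurable)).aestronglyMeasurable)
  · refine (ae_restrict_iff' measurableSet_uIoc).2 (ae_of_all _ fun z hz => ?_)
    have hz' : z ∈ Set.uIcc s t := Set.uIoc_subset_uIcc hz
    have h1 : |b z| ≤ M := hM z hz'
    have h2 : a z₀ ≤ a z := hmin hz'
    have hMnn : 0 ≤ M := (abs_nonneg _).trans h1
    have : |2 * b z / a z| = 2 * |b z| / a z := by
      rw [abs_div, abs_mul, abs_of_pos (ha_pos z)]
      norm_num
    show ‖2 * b z / a z‖ ≤ 2 * M / a z₀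
    rw [Real.norm_eq_abs, this]
    apply div_le_div₀ (by positivity) (by linarith) hm h2
/-- Monotonicity of `H(b,x) = u'(x)/(u(x) − u(x−c))` in the drift `b`
(Proposition 1 of the paper). -/
theorem H_antitone_in_drift
    (a b₁ b₂ : ℝ → ℝ) (ha_cont : Continuous a) (ha_pos : ∀ x, 0 < a x)
    (hb₁_meas : Measurable b₁) (hb₂_meas : Measurable b₂)
    (hb₁_loc : ∀ K : Set ℝ, IsCompact K → ∃ M, ∀ x ∈ K, |b₁ x| ≤ M)
    (hb₂_loc : ∀ K : Set ℝ, IsCompact K → ∃ M, ∀ x ∈ K, |b₂ x| ≤ M)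
    (hb : ∀ x, b₁ x ≤ b₂ x)
    (c : ℝ) (hc : 0 < c)
    (u₁ u₂ : ℝ → ℝ)
    (hu₁ : ∀ x, u₁ x = ∫ y in (0:ℝ)..x, Real.exp (-∫ z in (0:ℝ)..y, 2 * b₁ z / a z))
    (hu₂ : ∀ x, u₂ x = ∫ y in (0:ℝ)..x, Real.exp (-∫ z in (0:ℝ)..y, 2 * b₂ z / a z)) :
    ∀ x : ℝ,
      Real.exp (-∫ z in (0:ℝ)..x, 2 * b₂ z / a z) / (u₂ x - u₂ (x - c)) ≤
        Real.exp (-∫ z in (0:ℝ)..x, 2 * b₁ z / a z) / (u₁ x - u₁ (x - c)) := by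
  intro x
  set g₁ : ℝ → ℝ := fun z => 2 * b₁ z / a z with hg₁def
  set g₂ : ℝ → ℝ := fun z => 2 * b₂ z / a z with hg₂def
  have hint₁ := g_intervalIntegrable a b₁ ha_cont ha_pos hb₁_meas hb₁_loc
  have hint₂ := g_intervalIntegrable a b₂ ha_cont ha_pos hb₂_meas hb₂_loc
  set F₁ : ℝ → ℝ := fun y => ∫ z in (0:ℝ)..y, g₁ z with hF₁def
  set F₂ : ℝ → ℝ := fun y => ∫ z in (0:ℝ)..y, g₂ z with hF₂def
  have hF₁c : Continuous F₁ := intervalIntegral.continuous_primitive hint₁ 0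
  have hF₂c : Continuous F₂ := intervalIntegral.continuous_primitive hint₂ 0
  have hf₁c : Continuous fun y => Real.exp (-F₁ y) := Real.continuous_exp.comp hF₁c.neg
  have hf₂c : Continuous fun y => Real.exp (-F₂ y) := Real.continuous_exp.comp hF₂c.neg
  have hlt : x - c < x := by linarith
  -- rewrite the denominators as interval integrals over [x-c, x]
  have hd₁ : u₁ x - u₁ (x - c) = ∫ y in (x-c)..x, Real.exp (-F₁ y) := by
    rw [hu₁ x, hu₁ (x - c)]
    exact intervalIntegral.integral_interval_sub_left
      (hf₁c.intervalIntegrable 0 x) (hf₁c.intervalIntegrable 0 (x - c))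
  have hd₂ : u₂ x - u₂ (x - c) = ∫ y in (x-c)..x, Real.exp (-F₂ y) := by
    rw [hu₂ x, hu₂ (x - c)]
    exact intervalIntegral.integral_interval_sub_left
      (hf₂c.intervalIntegrable 0 x) (hf₂c.intervalIntegrable 0 (x - c))
  have hd₁pos : 0 < ∫ y in (x-c)..x, Real.exp (-F₁ y) :=
    intervalIntegral.intervalIntegral_pos_of_pos
      (hf₁c.intervalIntegrable _ _) (fun y => Real.exp_pos _) hlt
  have hd₂pos : 0 < ∫ y in (x-c)..x, Real.exp (-F₂ y) :=
    intervalIntegral.intervalIntegral_pos_of_pos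
      (hf₂c.intervalIntegrable _ _) (fun y => Real.exp_pos _) hlt
  rw [hd₁, hd₂, div_le_div_iff₀ hd₂pos hd₁pos]
  calc Real.exp (-F₂ x) * ∫ y in (x-c)..x, Real.exp (-F₁ y)
      = ∫ y in (x-c)..x, Real.exp (-F₂ x) * Real.exp (-F₁ y) :=
        (intervalIntegral.integral_const_mul _ _).symm
    _ ≤ ∫ y in (x-c)..x, Real.exp (-F₁ x) * Real.exp (-F₂ y) := by
        apply intervalIntegral.integral_mono_on hlt.le
          ((hf₁c.intervalIntegrable _ _).const_mul _)
          ((hf₂c.intervalIntegrable _ _).const_mul _)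
        intro y hy
        rw [← Real.exp_add, ← Real.exp_add, Real.exp_le_exp]
        have key : F₁ x - F₁ y ≤ F₂ x - F₂ y := by
          have e₁ : F₁ x - F₁ y = ∫ z in y..x, g₁ z :=
            intervalIntegral.integral_interval_sub_left (hint₁ 0 x) (hint₁ 0 y)
          have e₂ : F₂ x - F₂ y = ∫ z in y..x, g₂ z :=
            intervalIntegral.integral_interval_sub_left (hint₂ 0 x) (hint₂ 0 y)
          rw [e₁, e₂]
          apply intervalIntegral.integral_mono_on hy.2 (hint₁ y x) (hint₂ y x)
          intro z _
          have := hb z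
          have := ha_pos z
          gcongr
        linarith
    _ = Real.exp (-F₁ x) * ∫ y in (x-c)..x, Real.exp (-F₂ y) :=
        intervalIntegral.integral_const_mul _ _
end

section
/- Let a : ℝ → ℝ be continuous with a > 0, let b₁, b₂ : ℝ → ℝ be locally bounded and measurable with b₁(x) ≤ b₂(x) for all x, and let c > 0. For i = 1, 2 define u_i(x) = ∫₀ˣ exp(−∫₀ʸ (2b_i(z)/a(z)) dz) dy. If ∫_{x₀}^∞ exp(−∫₀ˣ (2b₁(z)/a(z)) dz) / (u₁(x) − u₁(x − c)) dx < ∞ for some x₀ ∈ ℝ, then also ∫_{x₀}^∞ exp(−∫₀ˣ (2b₂(z)/a(z)) dz) / (u₂(x) − u₂(x − c)) dx < ∞. -/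
open Real MeasureTheory intervalIntegral Set

lemma drift_intervalIntegrable (a b : ℝ → ℝ) (ha_cont : Continuous a) (ha_pos : ∀ x, 0 < a x)
    (hb_meas : Measurable b)
    (hb_loc : ∀ K : Set ℝ, IsCompact K → ∃ M, ∀ x ∈ K, |b x| ≤ M)
    (p q : ℝ) : IntervalIntegrable (fun z => 2 * b z / a z) volume p q := by
  obtain ⟨M, hM⟩ := hb_loc (uIcc p q) isCompact_uIcc
  obtain ⟨m, hm_mem, hmin⟩ := isCompact_uIcc.exists_isMinOn (nonempty_uIcc)
    ha_cont.continuousOn (f := a)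
  have hM0 : 0 ≤ M := le_trans (abs_nonneg _) (hM m hm_mem)
  rw [intervalIntegrable_iff]
  haveI : IsFiniteMeasure (volume.restrict (uIcc p q)) :=
    ⟨by rw [Measure.restrict_apply_univ]; exact isCompact_uIcc.measure_lt_top⟩
  refine IntegrableOn.mono_set (t := uIcc p q) ?_ Set.uIoc_subset_uIcc
  refine Integrable.mono' (integrable_const (2 * M / a m))
    (((hb_meas.const_mul 2).div ha_cont.measurable).aestronglyMeasurable)
    ((ae_restrict_iff' measurableSet_uIcc).mpr (ae_of_all _ fun z hz => ?_))
  have haz := ha_pos z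
  have ham := ha_pos m
  have h1 : |b z| ≤ M := hM z hz
  have h2 : a m ≤ a z := hmin hz
  rw [Real.norm_eq_abs, abs_div, abs_of_pos haz, abs_mul, abs_two]
  gcongr

/-- If the down-crossing criterion integral is finite for the smaller drift `b₁`,
then it is finite for the larger drift `b₂` (consequence of Proposition 1). -/
theorem criterion_monotone_in_drift
    (a b₁ b₂ : ℝ → ℝ) (ha_cont : Continuous a) (ha_pos : ∀ x, 0 < a x)
    (hb₁_meas : Measurable b₁) (hb₂_meas : Measurable b₂)
    (hb₁_loc : ∀ K : Set ℝ, IsCompact K → ∃ M, ∀ x ∈ K, |b₁ x| ≤ M)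
    (hb₂_loc : ∀ K : Set ℝ, IsCompact K → ∃ M, ∀ x ∈ K, |b₂ x| ≤ M)
    (hb : ∀ x, b₁ x ≤ b₂ x)
    (c : ℝ) (hc : 0 < c)
    (u₁ u₂ : ℝ → ℝ)
    (hu₁ : ∀ x, u₁ x = ∫ y in (0:ℝ)..x, Real.exp (-∫ z in (0:ℝ)..y, 2 * b₁ z / a z))
    (hu₂ : ∀ x, u₂ x = ∫ y in (0:ℝ)..x, Real.exp (-∫ z in (0:ℝ)..y, 2 * b₂ z / a z))
    (x₀ : ℝ)
    (h₁ : IntegrableOn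
      (fun x => Real.exp (-∫ z in (0:ℝ)..x, 2 * b₁ z / a z) / (u₁ x - u₁ (x - c)))
      (Ici x₀)) :
    IntegrableOn
      (fun x => Real.exp (-∫ z in (0:ℝ)..x, 2 * b₂ z / a z) / (u₂ x - u₂ (x - c)))
      (Ici x₀) := by
  have hint₁ : ∀ p q : ℝ, IntervalIntegrable (fun z => 2 * b₁ z / a z) volume p q :=
    drift_intervalIntegrable a b₁ ha_cont ha_pos hb₁_meas hb₁_loc
  have hint₂ : ∀ p q : ℝ, IntervalIntegrable (fun z => 2 * b₂ z / a z) volume p q :=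
    drift_intervalIntegrable a b₂ ha_cont ha_pos hb₂_meas hb₂_loc
  set A₁ : ℝ → ℝ := fun x => ∫ z in (0:ℝ)..x, 2 * b₁ z / a z with hA₁
  set A₂ : ℝ → ℝ := fun x => ∫ z in (0:ℝ)..x, 2 * b₂ z / a z with hA₂
  have hA₁c : Continuous A₁ := intervalIntegral.continuous_primitive hint₁ 0
  have hA₂c : Continuous A₂ := intervalIntegral.continuous_primitive hint₂ 0
  set f₁ : ℝ → ℝ := fun x => Real.exp (-A₁ x) with hf₁
  set f₂ : ℝ → ℝ := fun x => Real.exp (-A₂ x) with hf₂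
  have hf₁c : Continuous f₁ := Real.continuous_exp.comp hA₁c.neg
  have hf₂c : Continuous f₂ := Real.continuous_exp.comp hA₂c.neg
  have hf₁pos : ∀ x, 0 < f₁ x := fun x => Real.exp_pos _
  have hf₂pos : ∀ x, 0 < f₂ x := fun x => Real.exp_pos _
  have hf₁int : ∀ p q : ℝ, IntervalIntegrable f₁ volume p q :=
    fun p q => hf₁c.intervalIntegrable p q
  have hf₂int : ∀ p q : ℝ, IntervalIntegrable f₂ volume p q :=
    fun p q => hf₂c.intervalIntegrable p q
  have hud₁ : ∀ x, u₁ x - u₁ (x - c) = ∫ y in (x - c)..x, f₁ y := by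
    intro x
    rw [hu₁ x, hu₁ (x - c)]
    exact integral_interval_sub_left (hf₁int 0 x) (hf₁int 0 (x - c))
  have hud₂ : ∀ x, u₂ x - u₂ (x - c) = ∫ y in (x - c)..x, f₂ y := by
    intro x
    rw [hu₂ x, hu₂ (x - c)]
    exact integral_interval_sub_left (hf₂int 0 x) (hf₂int 0 (x - c))
  have hpos₁ : ∀ x, 0 < u₁ x - u₁ (x - c) := by
    intro x
    rw [hud₁ x]
    exact intervalIntegral_pos_of_pos_on (hf₁int _ _) (fun y _ => hf₁pos y) (by linarith)
  have hpos₂ : ∀ x, 0 < u₂ x - u₂ (x - c) := by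
    intro x
    rw [hud₂ x]
    exact intervalIntegral_pos_of_pos_on (hf₂int _ _) (fun y _ => hf₂pos y) (by linarith)
  -- pointwise key inequality
  have hkey : ∀ x, f₂ x / (u₂ x - u₂ (x - c)) ≤ f₁ x / (u₁ x - u₁ (x - c)) := by
    intro x
    rw [div_le_div_iff₀ (hpos₂ x) (hpos₁ x), hud₁ x, hud₂ x]
    have hptwise : ∀ y ∈ Icc (x - c) x, f₂ x * f₁ y ≤ f₁ x * f₂ y := by
      intro y hy
      have hA : A₁ x - A₁ y ≤ A₂ x - A₂ y := by
        have e₁ : A₁ x - A₁ y = ∫ z in y..x, 2 * b₁ z / a z :=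
          integral_interval_sub_left (hint₁ 0 x) (hint₁ 0 y)
        have e₂ : A₂ x - A₂ y = ∫ z in y..x, 2 * b₂ z / a z :=
          integral_interval_sub_left (hint₂ 0 x) (hint₂ 0 y)
        rw [e₁, e₂]
        refine integral_mono_on hy.2 (hint₁ y x) (hint₂ y x) fun z _ => ?_
        have := ha_pos z
        gcongr
        exact hb z
      calc f₂ x * f₁ y = Real.exp (-A₂ x + -A₁ y) := by rw [Real.exp_add]
        _ ≤ Real.exp (-A₁ x + -A₂ y) := by apply Real.exp_le_exp.mpr; linarith
        _ = f₁ x * f₂ y := by rw [Real.exp_add]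
    calc f₂ x * ∫ y in (x - c)..x, f₁ y = ∫ y in (x - c)..x, f₂ x * f₁ y := by
          rw [intervalIntegral.integral_const_mul]
      _ ≤ ∫ y in (x - c)..x, f₁ x * f₂ y := by
          refine integral_mono_on (by linarith) ((hf₁int _ _).const_mul _)
            ((hf₂int _ _).const_mul _) hptwise
      _ = f₁ x * ∫ y in (x - c)..x, f₂ y := by rw [intervalIntegral.integral_const_mul]
  -- continuity / measurability of the target integrand
  have hu₂c : Continuous u₂ := by
    have : Continuous fun x => ∫ y in (0:ℝ)..x, f₂ y :=
      intervalIntegral.continuous_primitive hf₂int 0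
    exact this.congr fun x => (hu₂ x).symm
  have hden₂c : Continuous fun x => u₂ x - u₂ (x - c) :=
    hu₂c.sub (hu₂c.comp (continuous_id.sub continuous_const))
  have hg₂c : Continuous fun x => f₂ x / (u₂ x - u₂ (x - c)) :=
    hf₂c.div hden₂c fun x => (hpos₂ x).ne'
  refine Integrable.mono h₁ hg₂c.aestronglyMeasurable (ae_of_all _ fun x => ?_)
  rw [Real.norm_eq_abs, Real.norm_eq_abs,
    abs_of_nonneg (div_nonneg (hf₂pos x).le (hpos₂ x).le),
    abs_of_nonneg (div_nonneg (hf₁pos x).le (hpos₁ x).le)]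
  exact hkey x
end

section
/- Let c > 0 and γ ≥ 1. Let b : ℝ → ℝ be locally bounded and measurable with b(x) = (1/(2c))·log x + (γ/c)·log(log x) for all x ≥ 3, and define u(x) = ∫₀ˣ exp(−∫₀ʸ 2b(z) dz) dy. Then there exists a constant K ∈ (0, ∞) such that lim_{x→∞} x·(log x)^{2γ−1} · exp(−∫₀ˣ 2b(y) dy) / (u(x) − u(x − c)) = K; that is, u'(x)/(u(x) − u(x−c)) is asymptotically K / (x·(log x)^{2γ−1}) as x → ∞. -/
open Real MeasureTheory intervalIntegral Filter Set


lemma my_intInt (b : ℝ → ℝ) (hb_meas : Measurable b)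
    (hb_loc : ∀ K : Set ℝ, IsCompact K → ∃ M, ∀ x ∈ K, |b x| ≤ M) (a₁ a₂ : ℝ) :
    IntervalIntegrable (fun z => 2 * b z) volume a₁ a₂ := by
  obtain ⟨M, hM⟩ := hb_loc (Set.uIcc a₁ a₂) isCompact_uIcc
  rw [intervalIntegrable_iff]
  apply MeasureTheory.Measure.integrableOn_of_bounded (M := 2 * |M|)
  · exact (measure_Ioc_lt_top).ne
  · exact ((measurable_const.mul hb_meas)).aestronglyMeasurable
  · refine MeasureTheory.ae_restrict_of_forall_mem measurableSet_uIoc (fun x hx => ?_)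
    have := hM x (Set.uIoc_subset_uIcc hx)
    rw [Real.norm_eq_abs, abs_mul, abs_two]
    nlinarith [abs_nonneg (b x), le_abs_self M]

lemma my_exp_integral (A e : ℝ) (hA : A ≠ 0) :
    (∫ t in (0:ℝ)..e, Real.exp (t * A)) = (Real.exp (e * A) - 1) / A := by
  rw [intervalIntegral.integral_comp_mul_right Real.exp hA]
  simp [integral_exp, smul_eq_mul, div_eq_inv_mul]

noncomputable def myφ (c γ : ℝ) (s : ℝ) : ℝ :=
  (1/c) * Real.log s + (2*γ/c) * Real.log (Real.log s)

lemma my_aux_tendsto (c γ d : ℝ) (hc : 0 < c) (hγ : 1 ≤ γ) :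
    Tendsto (fun x : ℝ => ((x - d) * Real.log (x - d) ^ (2*γ) - 1) /
      myφ c γ (x - d) / (x * Real.log x ^ (2*γ-1))) atTop (nhds c) := by
  unfold myφ
  have hsub : Tendsto (fun x : ℝ => x - d) atTop atTop :=
    tendsto_atTop_add_const_right atTop (-d) tendsto_id
  have hlog : Tendsto (fun x : ℝ => Real.log (x - d)) atTop atTop :=
    Real.tendsto_log_atTop.comp hsub
  have h1 : Tendsto (fun x : ℝ => (x - d) / x) atTop (nhds 1) := by
    have : Tendsto (fun x : ℝ => 1 - d / x) atTop (nhds (1 - 0)) :=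
      tendsto_const_nhds.sub (Tendsto.div_atTop tendsto_const_nhds tendsto_id)
    rw [sub_zero] at this
    refine this.congr' ?_
    filter_upwards [eventually_gt_atTop 0] with x hx
    field_simp
  have h2 : Tendsto (fun x : ℝ => Real.log (x - d) / Real.log x) atTop (nhds 1) := by
    have hnum : Tendsto (fun x : ℝ => Real.log ((x - d) / x)) atTop (nhds 0) := by
      have := h1.log one_ne_zero
      simpa using this
    have : Tendsto (fun x : ℝ => 1 + Real.log ((x - d) / x) / Real.log x) atTop (nhds (1 + 0)) :=
      tendsto_const_nhds.add (Tendsto.div_atTop hnum Real.tendsto_log_atTop)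
    rw [add_zero] at this
    refine this.congr' ?_
    filter_upwards [eventually_gt_atTop (max (d + 1) 1)] with x hx
    have hx1 : (1:ℝ) < x := lt_of_le_of_lt (le_max_right _ _) hx
    have hxd : 0 < x - d := by have := lt_of_le_of_lt (le_max_left _ _) hx; linarith
    have hlx : Real.log x ≠ 0 := ne_of_gt (Real.log_pos hx1)
    rw [Real.log_div (ne_of_gt hxd) (by positivity)]
    field_simp
    ring
  have h3 : Tendsto (fun x : ℝ => (Real.log (x - d) / Real.log x) ^ (2*γ-1)) atTop (nhds 1) := by
    have := h2.rpow_const (p := 2*γ-1) (Or.inl one_ne_zero)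
    simpa using this
  have h4 : Tendsto (fun x : ℝ =>
      Real.log (x - d) / ((1/c) * Real.log (x - d) + (2*γ/c) * Real.log (Real.log (x - d))))
      atTop (nhds c) := by
    have hll : Tendsto (fun x : ℝ => Real.log (Real.log (x - d)) / Real.log (x - d))
        atTop (nhds 0) := by
      have h0 : Tendsto (fun s : ℝ => Real.log s / s) atTop (nhds 0) :=
        Real.isLittleO_log_id_atTop.tendsto_div_nhds_zero
      exact h0.comp hlog
    have hinner : Tendsto (fun x : ℝ =>
        (1/c) + (2*γ/c) * (Real.log (Real.log (x - d)) / Real.log (x - d)))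
        atTop (nhds (1/c)) := by
      have : Tendsto (fun x : ℝ =>
          (1/c) + (2*γ/c) * (Real.log (Real.log (x - d)) / Real.log (x - d)))
          atTop (nhds ((1/c) + (2*γ/c) * 0)) :=
        tendsto_const_nhds.add (tendsto_const_nhds.mul hll)
      simpa using this
    have : Tendsto (fun x : ℝ =>
        1 / ((1/c) + (2*γ/c) * (Real.log (Real.log (x - d)) / Real.log (x - d))))
        atTop (nhds (1 / (1/c))) :=
      Tendsto.div tendsto_const_nhds hinner (by positivity)
    rw [one_div_one_div] at this
    refine this.congr' ?_
    filter_upwards [hlog.eventually (eventually_gt_atTop 0)] with x hx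
    have hlx : Real.log (x - d) ≠ 0 := ne_of_gt hx
    field_simp
  have h5 : Tendsto (fun x : ℝ =>
      1 / (((1/c) * Real.log (x - d) + (2*γ/c) * Real.log (Real.log (x - d))) *
        (x * Real.log x ^ (2*γ-1)))) atTop (nhds 0) := by
    have hφ : Tendsto (fun x : ℝ =>
        (1/c) * Real.log (x - d) + (2*γ/c) * Real.log (Real.log (x - d))) atTop atTop := by
      refine Filter.Tendsto.atTop_add_atTop ?_ ?_
      · exact (hlog.const_mul_atTop (by positivity))
      · exact ((Real.tendsto_log_atTop.comp hlog).const_mul_atTop (by positivity))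
    have hden : Tendsto (fun x : ℝ => x * Real.log x ^ (2*γ-1)) atTop atTop := by
      refine Tendsto.atTop_mul_atTop₀ tendsto_id ?_
      exact (tendsto_rpow_atTop (by linarith)).comp Real.tendsto_log_atTop
    simpa only [one_div, Pi.inv_def] using (hφ.atTop_mul_atTop₀ hden).inv_tendsto_atTop
  have hmain : Tendsto (fun x : ℝ =>
      ((x - d) / x) * ((Real.log (x - d) / Real.log x) ^ (2*γ-1)) *
        (Real.log (x - d) / ((1/c) * Real.log (x - d) + (2*γ/c) * Real.log (Real.log (x - d)))) -
      1 / (((1/c) * Real.log (x - d) + (2*γ/c) * Real.log (Real.log (x - d))) *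
        (x * Real.log x ^ (2*γ-1)))) atTop (nhds (1 * 1 * c - 0)) :=
    ((h1.mul h3).mul h4).sub h5
  rw [one_mul, one_mul, sub_zero] at hmain
  refine hmain.congr' ?_
  filter_upwards [eventually_gt_atTop (max (d + 9) 9)] with x hx
  have hx9 : (9:ℝ) < x := lt_of_le_of_lt (le_max_right _ _) hx
  have hxd : (9:ℝ) < x - d := by have := lt_of_le_of_lt (le_max_left _ _) hx; linarith
  have hlxpos : 0 < Real.log x := Real.log_pos (by linarith)
  have hapos : 0 < Real.log (x - d) := Real.log_pos (by linarith)
  have hla2 : (2:ℝ) < Real.log (x - d) := by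
    rw [Real.lt_log_iff_exp_lt (by linarith)]
    have h2e : Real.exp 2 = Real.exp 1 * Real.exp 1 := by
      rw [← Real.exp_add]; norm_num
    have := Real.exp_one_lt_d9
    nlinarith [Real.exp_pos 1]
  have hllpos : 0 < Real.log (Real.log (x - d)) := Real.log_pos (by linarith)
  have hφpos : 0 < (1/c) * Real.log (x - d) + (2*γ/c) * Real.log (Real.log (x - d)) := by
    positivity
  have hBpos : 0 < Real.log x ^ (2*γ-1) := Real.rpow_pos_of_pos hlxpos _
  have hApos : 0 < Real.log (x - d) ^ (2*γ-1) := Real.rpow_pos_of_pos hapos _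
  have hsplit : Real.log (x - d) ^ (2*γ) = Real.log (x - d) ^ (2*γ-1) * Real.log (x - d) := by
    rw [show (2*γ) = (2*γ-1) + 1 by ring, Real.rpow_add hapos, Real.rpow_one]; norm_num
  have hdiv : (Real.log (x - d) / Real.log x) ^ (2*γ-1)
      = Real.log (x - d) ^ (2*γ-1) / Real.log x ^ (2*γ-1) :=
    Real.div_rpow hapos.le hlxpos.le _
  rw [hsplit, hdiv]
  have hx0 : x ≠ 0 := by linarith
  field_simp

/-- For the drift `b(x) = (1/(2c))·log x + (γ/c)·log log x` (for large `x`),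
`u'(x)/(u(x) − u(x−c))` is asymptotically `K/(x (log x)^{2γ−1})` for some constant
`K ∈ (0,∞)` (l'Hôpital computation in the proof of Theorem 2). -/
theorem criterion_integrand_asymptotics
    (c γ : ℝ) (hc : 0 < c) (hγ : 1 ≤ γ)
    (b : ℝ → ℝ) (hb_meas : Measurable b)
    (hb_loc : ∀ K : Set ℝ, IsCompact K → ∃ M, ∀ x ∈ K, |b x| ≤ M)
    (hb : ∀ x : ℝ, 3 ≤ x →
      b x = (1 / (2 * c)) * Real.log x + (γ / c) * Real.log (Real.log x))
    (u : ℝ → ℝ)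
    (hu : ∀ x, u x = ∫ y in (0:ℝ)..x, Real.exp (-∫ z in (0:ℝ)..y, 2 * b z)) :
    ∃ K : ℝ, 0 < K ∧
      Tendsto
        (fun x : ℝ =>
          x * Real.log x ^ (2 * γ - 1) *
            Real.exp (-∫ y in (0:ℝ)..x, 2 * b y) / (u x - u (x - c)))
        atTop (nhds K) := by
  refine ⟨c⁻¹, inv_pos.mpr hc, ?_⟩
  have hint : ∀ a₁ a₂ : ℝ, IntervalIntegrable (fun z => 2 * b z) volume a₁ a₂ :=
    my_intInt b hb_meas hb_loc
  set F : ℝ → ℝ := fun x => ∫ z in (0:ℝ)..x, 2 * b z with hF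
  have hFcont : Continuous F := intervalIntegral.continuous_primitive hint 0
  have hgcont : Continuous fun y => Real.exp (-F y) := Real.continuous_exp.comp hFcont.neg
  have h2b : ∀ z : ℝ, 3 ≤ z → 2 * b z = myφ c γ z := by
    intro z hz
    rw [hb z hz]
    unfold myφ
    field_simp
  have hφmono : ∀ z w : ℝ, 3 ≤ z → z ≤ w → myφ c γ z ≤ myφ c γ w := by
    intro z w hz hzw
    have hz1 : (1:ℝ) < z := by linarith
    have hlog : Real.log z ≤ Real.log w := Real.log_le_log (by linarith) hzw
    have hlogz : 0 < Real.log z := Real.log_pos hz1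
    unfold myφ
    refine add_le_add ?_ ?_
    · exact mul_le_mul_of_nonneg_left hlog (by positivity)
    · exact mul_le_mul_of_nonneg_left (Real.log_le_log hlogz hlog) (by positivity)
  have hFsub : ∀ x y : ℝ, F x - F y = ∫ z in y..x, 2 * b z := fun x y =>
    intervalIntegral.integral_interval_sub_left (hint 0 x) (hint 0 y)
  set I : ℝ → ℝ := fun x => ∫ t in (0:ℝ)..c, Real.exp (F x - F (x - t)) with hI
  set den : ℝ → ℝ := fun x => x * Real.log x ^ (2*γ-1) with hden
  have hIcont : ∀ x : ℝ, Continuous fun t => Real.exp (F x - F (x - t)) := by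
    intro x
    exact Real.continuous_exp.comp
      (continuous_const.sub (hFcont.comp (continuous_const.sub continuous_id)))
  -- identity
  have hid : ∀ᶠ x in atTop, (I x / den x)⁻¹ =
      x * Real.log x ^ (2 * γ - 1) *
        Real.exp (-∫ y in (0:ℝ)..x, 2 * b y) / (u x - u (x - c)) := by
    filter_upwards [eventually_ge_atTop (c + 9)] with x hx
    have husub : u x - u (x - c) = ∫ y in (x - c)..x, Real.exp (-F y) := by
      rw [hu x, hu (x - c)]
      exact intervalIntegral.integral_interval_sub_left
        (hgcont.intervalIntegrable 0 x) (hgcont.intervalIntegrable 0 (x - c))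
    have hsubst : (∫ y in (x - c)..x, Real.exp (-F y))
        = ∫ t in (0:ℝ)..c, Real.exp (-F (x - t)) := by
      rw [intervalIntegral.integral_comp_sub_left (fun y => Real.exp (-F y)) x, sub_zero]
    have hfactor : (∫ t in (0:ℝ)..c, Real.exp (-F (x - t))) = Real.exp (-F x) * I x := by
      rw [hI, ← intervalIntegral.integral_const_mul]
      refine intervalIntegral.integral_congr (fun t _ => ?_)
      rw [← Real.exp_add]
      congr 1
      ring
    have hune : u x - u (x - c) = Real.exp (-F x) * I x := by
      rw [husub, hsubst, hfactor]
    have hFx : (∫ y in (0:ℝ)..x, 2 * b y) = F x := rfl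
    have hdenx : x * Real.log x ^ (2 * γ - 1) = den x := rfl
    rw [hFx, hdenx, hune, inv_div]
    rw [show den x * Real.exp (-F x) = Real.exp (-F x) * den x from mul_comm _ _,
      mul_div_mul_left _ _ (Real.exp_ne_zero _)]
  -- squeeze bounds
  have hbounds : ∀ᶠ x in atTop,
      ((x - c) * Real.log (x - c) ^ (2*γ) - 1) / myφ c γ (x - c) / (x * Real.log x ^ (2*γ-1))
        ≤ I x / den x ∧
      I x / den x ≤
        ((x - 0) * Real.log (x - 0) ^ (2*γ) - 1) / myφ c γ (x - 0)
          / (x * Real.log x ^ (2*γ-1)) := by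
    filter_upwards [eventually_ge_atTop (c + 9)] with x hx
    have hxc9 : (9:ℝ) ≤ x - c := by linarith
    have hx9 : (9:ℝ) ≤ x := by linarith
    have hlogxc : (2:ℝ) < Real.log (x - c) := by
      rw [Real.lt_log_iff_exp_lt (by linarith)]
      have h2e : Real.exp 2 = Real.exp 1 * Real.exp 1 := by rw [← Real.exp_add]; norm_num
      have := Real.exp_one_lt_d9
      nlinarith [Real.exp_pos 1]
    have hlogx : (2:ℝ) < Real.log x := by
      rw [Real.lt_log_iff_exp_lt (by linarith)]
      have h2e : Real.exp 2 = Real.exp 1 * Real.exp 1 := by rw [← Real.exp_add]; norm_num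
      have := Real.exp_one_lt_d9
      nlinarith [Real.exp_pos 1]
    have hφposc : 0 < myφ c γ (x - c) := by
      have h1 : 0 < Real.log (Real.log (x - c)) := Real.log_pos (by linarith)
      have h2 : 0 < Real.log (x - c) := by linarith
      unfold myφ; positivity
    have hφposx : 0 < myφ c γ x := by
      have h1 : 0 < Real.log (Real.log x) := Real.log_pos (by linarith)
      have h2 : 0 < Real.log x := by linarith
      unfold myφ; positivity
    have hdenpos : 0 < den x := by
      have h1 : 0 < Real.log x := by linarith
      have h2 := Real.rpow_pos_of_pos h1 (2*γ-1)
      rw [hden]; positivity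
    have hpt : ∀ t ∈ Icc (0:ℝ) c,
        Real.exp (t * myφ c γ (x - c)) ≤ Real.exp (F x - F (x - t)) ∧
        Real.exp (F x - F (x - t)) ≤ Real.exp (t * myφ c γ x) := by
      intro t ht
      have ht0 : 0 ≤ t := ht.1
      have htc : t ≤ c := ht.2
      have hxt3 : (3:ℝ) ≤ x - t := by linarith
      have hxtx : x - t ≤ x := by linarith
      rw [hFsub]
      constructor
      · rw [Real.exp_le_exp]
        have h1 : (∫ z in (x - t)..x, myφ c γ (x - c)) ≤ ∫ z in (x - t)..x, 2 * b z := by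
          refine intervalIntegral.integral_mono_on hxtx
            intervalIntegrable_const (hint _ _) (fun z hz => ?_)
          rw [h2b z (by linarith [hz.1])]
          exact hφmono (x - c) z (by linarith) (by linarith [hz.1])
        have h2 : (∫ z in (x - t)..x, myφ c γ (x - c)) = t * myφ c γ (x - c) := by
          rw [intervalIntegral.integral_const, smul_eq_mul]
          ring_nf
        linarith
      · rw [Real.exp_le_exp]
        have h1 : (∫ z in (x - t)..x, 2 * b z) ≤ ∫ z in (x - t)..x, myφ c γ x := by
          refine intervalIntegral.integral_mono_on hxtx
            (hint _ _) intervalIntegrable_const (fun z hz => ?_)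
          rw [h2b z (by linarith [hz.1])]
          exact hφmono z x (by linarith [hz.1]) hz.2
        have h2 : (∫ z in (x - t)..x, myφ c γ x) = t * myφ c γ x := by
          rw [intervalIntegral.integral_const, smul_eq_mul]
          ring_nf
        linarith
    have hIlow : (∫ t in (0:ℝ)..c, Real.exp (t * myφ c γ (x - c))) ≤ I x := by
      rw [hI]
      refine intervalIntegral.integral_mono_on hc.le
        ((Real.continuous_exp.comp (continuous_id.mul continuous_const)).intervalIntegrable 0 c)
        ((hIcont x).intervalIntegrable 0 c) (fun t ht => (hpt t ht).1)
    have hIup : I x ≤ ∫ t in (0:ℝ)..c, Real.exp (t * myφ c γ x) := by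
      rw [hI]
      refine intervalIntegral.integral_mono_on hc.le
        ((hIcont x).intervalIntegrable 0 c)
        ((Real.continuous_exp.comp (continuous_id.mul continuous_const)).intervalIntegrable 0 c)
        (fun t ht => (hpt t ht).2)
    have hexpφ : ∀ s : ℝ, 9 ≤ s → 2 < Real.log s →
        Real.exp (c * myφ c γ s) = s * Real.log s ^ (2*γ) := by
      intro s hs hls
      have hspos : (0:ℝ) < s := by linarith
      have hlpos : 0 < Real.log s := by linarith
      have hcφ : c * myφ c γ s = Real.log s + Real.log (Real.log s) * (2*γ) := by
        unfold myφ; field_simp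
      rw [hcφ, Real.exp_add, Real.exp_log hspos, Real.rpow_def_of_pos hlpos]
    have hcompl : (∫ t in (0:ℝ)..c, Real.exp (t * myφ c γ (x - c)))
        = ((x - c) * Real.log (x - c) ^ (2*γ) - 1) / myφ c γ (x - c) := by
      rw [my_exp_integral _ _ hφposc.ne', hexpφ (x - c) hxc9 hlogxc]
    have hcompu : (∫ t in (0:ℝ)..c, Real.exp (t * myφ c γ x))
        = (x * Real.log x ^ (2*γ) - 1) / myφ c γ x := by
      rw [my_exp_integral _ _ hφposx.ne', hexpφ x hx9 hlogx]
    have hdenx : x * Real.log x ^ (2*γ-1) = den x := rfl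
    rw [hdenx]
    constructor
    · rw [← hcompl]
      exact (div_le_div_iff_of_pos_right hdenpos).mpr hIlow
    · rw [sub_zero, ← hcompu]
      exact (div_le_div_iff_of_pos_right hdenpos).mpr hIup
  have hT : Tendsto (fun x => I x / den x) atTop (nhds c) :=
    tendsto_of_tendsto_of_tendsto_of_le_of_le' (my_aux_tendsto c γ c hc hγ)
      (my_aux_tendsto c γ 0 hc hγ)
      (hbounds.mono fun x h => h.1) (hbounds.mono fun x h => h.2)
  exact (hT.inv₀ hc.ne').congr' hid
end

section
/- Let c > 0 and γ > 1. Let b : ℝ → ℝ be locally bounded and measurable with b(x) = (1/(2c))·log x + (γ/c)·log(log x) for all x ≥ 3, and define u(x) = ∫₀ˣ exp(−∫₀ʸ 2b(z) dz) dy. Then ∫_3^∞ exp(−∫₀ˣ 2b(y) dy) / (u(x) − u(x − c)) dx < ∞. -/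
open Real MeasureTheory intervalIntegral Set

/-- For `b(x) = (1/(2c))·log x + (γ/c)·log log x` with `γ > 1`, the down-crossing
criterion integral `∫^∞ u'(x)/(u(x) − u(x−c)) dx` is finite. -/
theorem criterion_finite_for_critical_drift
    (c γ : ℝ) (hc : 0 < c) (hγ : 1 < γ)
    (b : ℝ → ℝ) (hb_meas : Measurable b)
    (hb_loc : ∀ K : Set ℝ, IsCompact K → ∃ M, ∀ x ∈ K, |b x| ≤ M)
    (hb : ∀ x : ℝ, 3 ≤ x →
      b x = (1 / (2 * c)) * Real.log x + (γ / c) * Real.log (Real.log x))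
    (u : ℝ → ℝ)
    (hu : ∀ x, u x = ∫ y in (0:ℝ)..x, Real.exp (-∫ z in (0:ℝ)..y, 2 * b z)) :
    IntegrableOn
      (fun x => Real.exp (-∫ y in (0:ℝ)..x, 2 * b y) / (u x - u (x - c)))
      (Ici (3:ℝ)) := by
  have he3 : Real.exp 1 ≤ 3 := le_trans Real.exp_one_lt_d9.le (by norm_num)
  have hlog1 : ∀ z : ℝ, 3 ≤ z → 1 ≤ Real.log z := fun z hz =>
    (Real.le_log_iff_exp_le (by linarith)).2 (he3.trans hz)
  have hb_nonneg : ∀ z : ℝ, 3 ≤ z → 0 ≤ b z := by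
    intro z hz
    rw [hb z hz]
    have h1 := hlog1 z hz
    have h2 : (0:ℝ) ≤ Real.log (Real.log z) := Real.log_nonneg h1
    have h3 : (0:ℝ) ≤ Real.log z := by linarith
    exact add_nonneg (mul_nonneg (by positivity) h3) (mul_nonneg (by positivity) h2)
  have hb_mono : ∀ s z : ℝ, 3 ≤ s → s ≤ z → b s ≤ b z := by
    intro s z hs hsz
    rw [hb s hs, hb z (le_trans hs hsz)]
    have h1 : Real.log s ≤ Real.log z := Real.log_le_log (by linarith) hsz
    have h2 : Real.log (Real.log s) ≤ Real.log (Real.log z) :=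
      Real.log_le_log (by linarith [hlog1 s hs]) h1
    have hc1 : (0:ℝ) ≤ 1 / (2 * c) := by positivity
    have hc2 : (0:ℝ) ≤ γ / c := by positivity
    have := mul_le_mul_of_nonneg_left h1 hc1
    have := mul_le_mul_of_nonneg_left h2 hc2
    linarith
  -- interval integrability of 2*b
  have hbi : ∀ p q : ℝ, IntervalIntegrable (fun z => 2 * b z) volume p q := by
    intro p q
    obtain ⟨M, hM⟩ := hb_loc (uIcc p q) isCompact_uIcc
    rw [intervalIntegrable_iff]
    refine (Measure.integrableOn_of_bounded (M := 2 * M)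
      isCompact_uIcc.measure_lt_top.ne
      ((hb_meas.const_mul 2).aestronglyMeasurable) ?_).mono_set uIoc_subset_uIcc
    refine (ae_restrict_iff' measurableSet_uIcc).2 (Filter.Eventually.of_forall ?_)
    intro x hx
    have h := hM x hx
    have : ‖(2:ℝ) * b x‖ = 2 * |b x| := by
      rw [Real.norm_eq_abs, abs_mul, abs_two]
    rw [this]; linarith
  have hFc : Continuous fun x : ℝ => ∫ z in (0:ℝ)..x, 2 * b z :=
    intervalIntegral.continuous_primitive hbi 0
  have hEc : Continuous fun y : ℝ => Real.exp (-∫ z in (0:ℝ)..y, 2 * b z) :=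
    hFc.neg.rexp
  have hEi : ∀ p q : ℝ,
      IntervalIntegrable (fun y => Real.exp (-∫ z in (0:ℝ)..y, 2 * b z)) volume p q :=
    fun p q => hEc.intervalIntegrable p q
  have hden : ∀ x : ℝ, u x - u (x - c)
      = ∫ y in (x - c)..x, Real.exp (-∫ z in (0:ℝ)..y, 2 * b z) := by
    intro x
    rw [hu x, hu (x - c),
      ← intervalIntegral.integral_add_adjacent_intervals (hEi 0 (x - c)) (hEi (x - c) x)]
    ring
  have hden_pos : ∀ x : ℝ, 0 < u x - u (x - c) := by
    intro x
    rw [hden x]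
    exact intervalIntegral.intervalIntegral_pos_of_pos_on (hEi _ _)
      (fun y _ => Real.exp_pos _) (by linarith)
  have huc : Continuous u := by
    have h : Continuous fun x : ℝ => ∫ y in (0:ℝ)..x,
        Real.exp (-∫ z in (0:ℝ)..y, 2 * b z) :=
      intervalIntegral.continuous_primitive hEi 0
    have hu' : u = fun x => ∫ y in (0:ℝ)..x, Real.exp (-∫ z in (0:ℝ)..y, 2 * b z) :=
      funext hu
    rw [hu']; exact h
  have hcont : Continuous fun x => Real.exp (-∫ y in (0:ℝ)..x, 2 * b y)
      / (u x - u (x - c)) :=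
    hEc.div (huc.sub (huc.comp (continuous_id.sub continuous_const)))
      fun x => (hden_pos x).ne'
  -- the comparison function
  set C : ℝ := Real.exp 1 * ((1 + 2 * γ) / c) with hCdef
  have hCpos : 0 < C := by
    have := Real.exp_pos (1:ℝ); positivity
  -- pointwise bound for x > c + 6
  have hbound : ∀ x : ℝ, c + 6 < x →
      Real.exp (-∫ y in (0:ℝ)..x, 2 * b y) / (u x - u (x - c))
        ≤ C * (Real.log (x - c)) ^ (1 - 2 * γ) / (x - c) := by
    intro x hx
    have hs6 : (6:ℝ) < x - c := by linarith
    have hs3 : (3:ℝ) ≤ x - c := by linarith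
    have hspos : (0:ℝ) < x - c := by linarith
    have hL1 : 1 ≤ Real.log (x - c) := hlog1 _ hs3
    have hLpos : 0 < Real.log (x - c) := by linarith
    have hlogL : 0 ≤ Real.log (Real.log (x - c)) := Real.log_nonneg hL1
    set L := Real.log (x - c) with hLdef
    set μ : ℝ := 2 * b (x - c) with hμdef
    have hμval : μ = (1 / c) * L + (2 * γ / c) * Real.log L := by
      rw [hμdef, hb (x - c) hs3, hLdef]; ring
    have hμ_lb : L / c ≤ μ := by
      rw [hμval]
      have : 0 ≤ (2 * γ / c) * Real.log L := mul_nonneg (by positivity) hlogL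
      have hLc : L / c = (1 / c) * L := by ring
      linarith [hLc ▸ le_refl (L / c)]
    have hμpos : 0 < μ := lt_of_lt_of_le (by positivity) hμ_lb
    set δ : ℝ := 1 / μ with hδdef
    have hδpos : 0 < δ := by positivity
    have hδc : δ ≤ c := by
      rw [hδdef, div_le_iff₀ hμpos]
      have h1 : L ≤ c * μ := by
        have := mul_le_mul_of_nonneg_left hμ_lb (le_of_lt hc)
        calc L = c * (L / c) := by field_simp
        _ ≤ c * μ := this
      linarith
    -- (b): ∫_{s+δ}^x 2b ≥ (c-δ)μ
    have hkey1 : (c - δ) * μ ≤ ∫ z in (x - c + δ)..x, 2 * b z := by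
      have hle : x - c + δ ≤ x := by linarith
      have hmono : ∀ z ∈ Icc (x - c + δ) x, (fun _ : ℝ => μ) z ≤ 2 * b z := by
        intro z hz
        have hz1 : x - c ≤ z := by have := hz.1; linarith
        have := hb_mono (x - c) z hs3 hz1
        simp only [hμdef]; linarith
      have := intervalIntegral.integral_mono_on hle (intervalIntegrable_const) (hbi _ _) hmono
      rw [intervalIntegral.integral_const, smul_eq_mul] at this
      calc (c - δ) * μ = (x - (x - c + δ)) * μ := by ring
      _ ≤ _ := this
    -- (c): denominator lower bound
    have hkey2 : δ * Real.exp (-∫ z in (0:ℝ)..(x - c + δ), 2 * b z) ≤ u x - u (x - c) := by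
      rw [hden x]
      have hle1 : x - c ≤ x - c + δ := by linarith
      have hle2 : x - c + δ ≤ x := by linarith
      rw [← intervalIntegral.integral_add_adjacent_intervals (hEi (x - c) (x - c + δ))
        (hEi (x - c + δ) x)]
      have h2nn : 0 ≤ ∫ y in (x - c + δ)..x, Real.exp (-∫ z in (0:ℝ)..y, 2 * b z) :=
        intervalIntegral.integral_nonneg hle2 (fun y _ => (Real.exp_pos _).le)
      have h1 : δ * Real.exp (-∫ z in (0:ℝ)..(x - c + δ), 2 * b z)
          ≤ ∫ y in (x - c)..(x - c + δ), Real.exp (-∫ z in (0:ℝ)..y, 2 * b z) := by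
        have hmono : ∀ y ∈ Icc (x - c) (x - c + δ),
            (fun _ : ℝ => Real.exp (-∫ z in (0:ℝ)..(x - c + δ), 2 * b z)) y
              ≤ Real.exp (-∫ z in (0:ℝ)..y, 2 * b z) := by
          intro y hy
          apply Real.exp_le_exp.2
          simp only [neg_le_neg_iff]
          have hsplit : (∫ z in (0:ℝ)..y, 2 * b z) + ∫ z in y..(x - c + δ), 2 * b z
              = ∫ z in (0:ℝ)..(x - c + δ), 2 * b z :=
            intervalIntegral.integral_add_adjacent_intervals (hbi 0 y) (hbi y (x - c + δ))
          have hnn : 0 ≤ ∫ z in y..(x - c + δ), 2 * b z := by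
            apply intervalIntegral.integral_nonneg hy.2
            intro z hz
            have : (3:ℝ) ≤ z := le_trans hs3 (le_trans hy.1 hz.1)
            have := hb_nonneg z this
            linarith
          linarith
        have := intervalIntegral.integral_mono_on hle1 (intervalIntegrable_const) (hEi _ _) hmono
        rw [intervalIntegral.integral_const, smul_eq_mul] at this
        calc δ * Real.exp (-∫ z in (0:ℝ)..(x - c + δ), 2 * b z)
            = (x - c + δ - (x - c)) * Real.exp (-∫ z in (0:ℝ)..(x - c + δ), 2 * b z) := by ring
        _ ≤ _ := this
      linarith
    -- (d): combine
    have hEpos : 0 < Real.exp (-∫ z in (0:ℝ)..(x - c + δ), 2 * b z) := Real.exp_pos _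
    have hd1 : Real.exp (-∫ y in (0:ℝ)..x, 2 * b y) / (u x - u (x - c))
        ≤ Real.exp (-∫ y in (0:ℝ)..x, 2 * b y)
          / (δ * Real.exp (-∫ z in (0:ℝ)..(x - c + δ), 2 * b z)) := by
      apply div_le_div_of_nonneg_left (Real.exp_pos _).le (by positivity) hkey2
    have hd2 : Real.exp (-∫ y in (0:ℝ)..x, 2 * b y)
          / (δ * Real.exp (-∫ z in (0:ℝ)..(x - c + δ), 2 * b z))
        = μ * Real.exp (-∫ z in (x - c + δ)..x, 2 * b z) := by
      have hsplit : (∫ z in (0:ℝ)..(x - c + δ), 2 * b z)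
          + ∫ z in (x - c + δ)..x, 2 * b z = ∫ z in (0:ℝ)..x, 2 * b z :=
        intervalIntegral.integral_add_adjacent_intervals (hbi _ _) (hbi _ _)
      have hA : (-∫ y in (0:ℝ)..x, 2 * b y)
          = (-∫ z in (0:ℝ)..(x - c + δ), 2 * b z)
            + (-∫ z in (x - c + δ)..x, 2 * b z) := by linarith
      rw [hA, Real.exp_add]
      have hμδ : μ * δ = 1 := by rw [hδdef]; field_simp
      generalize hAe : Real.exp (-∫ z in (0:ℝ)..(x - c + δ), 2 * b z) = A at hEpos ⊢
      generalize Real.exp (-∫ z in (x - c + δ)..x, 2 * b z) = B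
      rw [div_eq_iff (by positivity : (0:ℝ) < δ * A).ne']
      linear_combination (-(A * B)) * hμδ
    have hd3 : μ * Real.exp (-∫ z in (x - c + δ)..x, 2 * b z)
        ≤ μ * Real.exp (1 - c * μ) := by
      apply mul_le_mul_of_nonneg_left _ hμpos.le
      apply Real.exp_le_exp.2
      have hδμ : δ * μ = 1 := by rw [hδdef]; field_simp
      nlinarith [hkey1]
    -- (e): final estimate
    have he : μ * Real.exp (1 - c * μ) ≤ C * L ^ (1 - 2 * γ) / (x - c) := by
      have hcμ : c * μ = L + 2 * γ * Real.log L := by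
        rw [hμval]; field_simp
      have hexp : Real.exp (1 - c * μ)
          = Real.exp 1 * (x - c)⁻¹ * L ^ (-(2 * γ)) := by
        rw [hcμ, show (1 : ℝ) - (L + 2 * γ * Real.log L)
          = 1 + (-L) + (Real.log L * (-(2 * γ))) by ring,
          Real.exp_add, Real.exp_add, Real.rpow_def_of_pos hLpos]
        congr 1
        rw [Real.exp_neg, hLdef, Real.exp_log hspos]
      have hμub : μ ≤ (1 + 2 * γ) / c * L := by
        rw [hμval]
        have hlogLleL : Real.log L ≤ L := by
          have := Real.log_le_sub_one_of_pos hLpos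
          linarith
        have h1 : (2 * γ / c) * Real.log L ≤ (2 * γ / c) * L :=
          mul_le_mul_of_nonneg_left hlogLleL (by positivity)
        have : (1 / c) * L + (2 * γ / c) * L = (1 + 2 * γ) / c * L := by ring
        linarith
      have hrpow_nn : (0:ℝ) ≤ L ^ (-(2 * γ)) := Real.rpow_nonneg hLpos.le _
      have hLsplit : L ^ (1 - 2 * γ) = L * L ^ (-(2 * γ)) := by
        rw [show (1 : ℝ) - 2 * γ = 1 + (-(2 * γ)) by ring, Real.rpow_add hLpos,
          Real.rpow_one]
      calc μ * Real.exp (1 - c * μ)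
          = μ * (Real.exp 1 * (x - c)⁻¹ * L ^ (-(2 * γ))) := by rw [hexp]
        _ ≤ ((1 + 2 * γ) / c * L) * (Real.exp 1 * (x - c)⁻¹ * L ^ (-(2 * γ))) := by
            apply mul_le_mul_of_nonneg_right hμub
            have := Real.exp_pos (1:ℝ)
            positivity
        _ = C * L ^ (1 - 2 * γ) / (x - c) := by
            rw [hCdef, hLsplit]; field_simp
    calc Real.exp (-∫ y in (0:ℝ)..x, 2 * b y) / (u x - u (x - c))
        ≤ Real.exp (-∫ y in (0:ℝ)..x, 2 * b y)
          / (δ * Real.exp (-∫ z in (0:ℝ)..(x - c + δ), 2 * b z)) := hd1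
      _ = μ * Real.exp (-∫ z in (x - c + δ)..x, 2 * b z) := hd2
      _ ≤ μ * Real.exp (1 - c * μ) := hd3
      _ ≤ C * L ^ (1 - 2 * γ) / (x - c) := he
  -- integrability of the comparison function on Ioi (c + 6)
  have hgint : IntegrableOn (fun x => C * (Real.log (x - c)) ^ (1 - 2 * γ) / (x - c))
      (Ioi (c + 6)) := by
    have h2γ : (2 : ℝ) - 2 * γ ≠ 0 := by intro h; nlinarith
    have hGderiv : ∀ x : ℝ, c + 6 ≤ x →
        HasDerivAt (fun y => (C / (2 - 2 * γ)) * (Real.log (y - c)) ^ (2 - 2 * γ))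
          (C * (Real.log (x - c)) ^ (1 - 2 * γ) / (x - c)) x := by
      intro x hx
      have hspos : (0:ℝ) < x - c := by linarith
      have hLpos : 0 < Real.log (x - c) := by linarith [hlog1 (x - c) (by linarith)]
      have hl : HasDerivAt (fun y : ℝ => Real.log (y - c)) (x - c)⁻¹ x := by
        have h1 : HasDerivAt (fun y : ℝ => y - c) 1 x := (hasDerivAt_id x).sub_const c
        have := (Real.hasDerivAt_log hspos.ne').comp x h1
        simp only [mul_one] at this; exact this
      have hr := (hl.rpow_const (p := 2 - 2 * γ) (Or.inl hLpos.ne')).const_mul (C / (2 - 2 * γ))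
      refine hr.congr_deriv ?_
      rw [show (2 : ℝ) - 2 * γ - 1 = 1 - 2 * γ by ring]
      have h1γ : (1:ℝ) - γ ≠ 0 := sub_ne_zero.2 hγ.ne
      field_simp
    have htend : Filter.Tendsto (fun y => (C / (2 - 2 * γ)) * (Real.log (y - c)) ^ (2 - 2 * γ))
        Filter.atTop (nhds 0) := by
      have h1 : Filter.Tendsto (fun y : ℝ => Real.log (y - c)) Filter.atTop Filter.atTop :=
        Real.tendsto_log_atTop.comp (Filter.tendsto_atTop_add_const_right _ (-c)
          Filter.tendsto_id)
      have h2 : Filter.Tendsto (fun t : ℝ => t ^ (2 - 2 * γ)) Filter.atTop (nhds 0) := by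
        have := tendsto_rpow_neg_atTop (y := 2 * γ - 2) (by linarith)
        simpa [show -(2 * γ - 2) = 2 - 2 * γ by ring] using this
      have := (h2.comp h1).const_mul (C / (2 - 2 * γ))
      simpa using this
    refine integrableOn_Ioi_deriv_of_nonneg ?_ (fun x hx => hGderiv x hx.le) ?_ htend
    · exact (hGderiv (c + 6) le_rfl).continuousAt.continuousWithinAt
    · intro x hx
      have hspos : (0:ℝ) < x - c := by linarith [mem_Ioi.1 hx]
      have hLpos : 0 < Real.log (x - c) := by
        have := hlog1 (x - c) (by linarith [mem_Ioi.1 hx]); linarith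
      positivity
  -- assemble
  have h36 : (3:ℝ) ≤ c + 6 := by linarith
  rw [← Set.Icc_union_Ioi_eq_Ici h36]
  refine (hcont.continuousOn.integrableOn_Icc).union ?_
  refine Integrable.mono' hgint hcont.aestronglyMeasurable.restrict ?_
  refine (ae_restrict_iff' measurableSet_Ioi).2 (Filter.Eventually.of_forall ?_)
  intro x hx
  rw [Real.norm_eq_abs, abs_of_pos (div_pos (Real.exp_pos _) (hden_pos x))]
  exact hbound x (mem_Ioi.1 hx)
end

section
/- Let c > 0. Let b : ℝ → ℝ be locally bounded and measurable with b(x) = (1/(2c))·log x + (1/c)·log(log x) for all x ≥ 3, and define u(x) = ∫₀ˣ exp(−∫₀ʸ 2b(z) dz) dy. Then ∫_3^∞ exp(−∫₀ˣ 2b(y) dy) / (u(x) − u(x − c)) dx = ∞. -/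
open Real MeasureTheory intervalIntegral Set
open scoped ENNReal NNReal

/-- Divergence of `∫ 1/(c x log x)` over `[a, ∞)` for `a ≥ 3`. -/
lemma aux_lintegral_inv_mul_log_eq_top (c a : ℝ) (hc : 0 < c) (ha : 3 ≤ a) :
    ∫⁻ x in Ici a, ENNReal.ofReal (1 / (c * x * Real.log x)) = ⊤ := by
  have hlog3 : (1 : ℝ) ≤ Real.log 3 := by
    rw [Real.le_log_iff_exp_le (by norm_num : (0:ℝ) < 3)]
    calc Real.exp 1 ≤ 2.7182818286 := Real.exp_one_lt_d9.le
      _ ≤ 3 := by norm_num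
  have hloga : 1 ≤ Real.log a := le_trans hlog3 (Real.log_le_log (by norm_num) ha)
  apply ENNReal.eq_top_of_forall_nnreal_le
  intro r
  -- pick T large
  set T : ℝ := max a (Real.exp (Real.exp (c * r + Real.log (Real.log a)))) with hT
  have hTa : a ≤ T := le_max_left _ _
  have haT : ∀ x ∈ Icc a T, 0 < x ∧ 1 ≤ Real.log x := by
    intro x hx
    constructor
    · linarith [hx.1]
    · exact le_trans hloga (Real.log_le_log (by linarith) hx.1)
  -- antiderivative
  have hderiv : ∀ x ∈ uIcc a T, HasDerivAt (fun y => (1/c) * Real.log (Real.log y))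
      (1 / (c * x * Real.log x)) x := by
    intro x hx
    rw [uIcc_of_le hTa] at hx
    obtain ⟨hx0, hlx⟩ := haT x hx
    have hlx0 : Real.log x ≠ 0 := by linarith
    have h1 : HasDerivAt Real.log x⁻¹ x := Real.hasDerivAt_log (ne_of_gt hx0)
    have h2 : HasDerivAt (fun y => Real.log (Real.log y)) ((Real.log x)⁻¹ * x⁻¹) x :=
      (Real.hasDerivAt_log hlx0).comp x h1
    have h3 := h2.const_mul (1/c)
    refine h3.congr_deriv ?_
    simp only [one_div, mul_inv]
    ring
  have hcont : ContinuousOn (fun x => 1 / (c * x * Real.log x)) (uIcc a T) := by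
    rw [uIcc_of_le hTa]
    apply ContinuousOn.div continuousOn_const
    · exact (continuousOn_const.mul continuousOn_id).mul
        (Real.continuousOn_log.mono (fun x hx => by
          have := haT x hx; simp only [mem_compl_iff, mem_singleton_iff]
          exact ne_of_gt this.1))
    · intro x hx
      obtain ⟨hx0, hlx⟩ := haT x hx
      have : 0 < c * x * Real.log x := by positivity
      linarith
  have hint : IntervalIntegrable (fun x => 1 / (c * x * Real.log x)) volume a T :=
    hcont.intervalIntegrable
  have hcalc : ∫ x in a..T, 1 / (c * x * Real.log x) =
      (1/c) * Real.log (Real.log T) - (1/c) * Real.log (Real.log a) :=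
    integral_eq_sub_of_hasDerivAt hderiv hint
  -- the integral is ≥ r
  have hlogT : Real.log (Real.log T) ≥ c * r + Real.log (Real.log a) := by
    have h1 : Real.exp (Real.exp (c * r + Real.log (Real.log a))) ≤ T := le_max_right _ _
    have h2 : Real.exp (c * r + Real.log (Real.log a)) ≤ Real.log T := by
      rw [← Real.log_exp (Real.exp (c * r + Real.log (Real.log a)))]
      exact Real.log_le_log (Real.exp_pos _) h1
    calc c * r + Real.log (Real.log a)
        = Real.log (Real.exp (c * r + Real.log (Real.log a))) := (Real.log_exp _).symm
      _ ≤ Real.log (Real.log T) := Real.log_le_log (Real.exp_pos _) h2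
  have hr_le : (r : ℝ) ≤ ∫ x in a..T, 1 / (c * x * Real.log x) := by
    rw [hcalc]
    have : (1/c) * (c * r) ≤ (1/c) * (Real.log (Real.log T) - Real.log (Real.log a)) := by
      apply mul_le_mul_of_nonneg_left (by linarith) (by positivity)
    calc (r : ℝ) = (1/c) * (c * r) := by field_simp
      _ ≤ _ := this
      _ = _ := by ring
  -- connect to lintegral
  have hnn : ∀ x ∈ Ioc a T, 0 ≤ 1 / (c * x * Real.log x) := by
    intro x hx
    obtain ⟨hx0, hlx⟩ := haT x ⟨hx.1.le, hx.2⟩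
    positivity
  have hInt : IntegrableOn (fun x => 1 / (c * x * Real.log x)) (Ioc a T) volume := by
    rw [intervalIntegrable_iff_integrableOn_Ioc_of_le hTa] at hint
    exact hint
  have key : ENNReal.ofReal (∫ x in Ioc a T, 1 / (c * x * Real.log x)) =
      ∫⁻ x in Ioc a T, ENNReal.ofReal (1 / (c * x * Real.log x)) := by
    apply MeasureTheory.ofReal_integral_eq_lintegral_ofReal hInt
    exact (ae_restrict_iff' measurableSet_Ioc).2 (Filter.Eventually.of_forall hnn)
  calc (r : ℝ≥0∞) = ENNReal.ofReal (r : ℝ) := ENNReal.ofReal_coe_nnreal.symm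
    _ ≤ ENNReal.ofReal (∫ x in Ioc a T, 1 / (c * x * Real.log x)) := by
        apply ENNReal.ofReal_le_ofReal
        rwa [← intervalIntegral.integral_of_le hTa]
    _ = ∫⁻ x in Ioc a T, ENNReal.ofReal (1 / (c * x * Real.log x)) := key
    _ ≤ ∫⁻ x in Ici a, ENNReal.ofReal (1 / (c * x * Real.log x)) :=
        lintegral_mono_set (fun x hx => le_of_lt hx.1)

/-- For `b(x) = (1/(2c))·log x + (1/c)·log log x`, the down-crossing criterion
integral `∫^∞ u'(x)/(u(x) − u(x−c)) dx` diverges. -/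
theorem criterion_infinite_for_critical_drift
    (c : ℝ) (hc : 0 < c)
    (b : ℝ → ℝ) (hb_meas : Measurable b)
    (hb_loc : ∀ K : Set ℝ, IsCompact K → ∃ M, ∀ x ∈ K, |b x| ≤ M)
    (hb : ∀ x : ℝ, 3 ≤ x →
      b x = (1 / (2 * c)) * Real.log x + (1 / c) * Real.log (Real.log x))
    (u : ℝ → ℝ)
    (hu : ∀ x, u x = ∫ y in (0:ℝ)..x, Real.exp (-∫ z in (0:ℝ)..y, 2 * b z)) :
    ∫⁻ x in Ici (3:ℝ),
      ENNReal.ofReal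
        (Real.exp (-∫ y in (0:ℝ)..x, 2 * b y) / (u x - u (x - c))) = ⊤ := by
  have hlog3 : (1 : ℝ) ≤ Real.log 3 := by
    rw [Real.le_log_iff_exp_le (by norm_num : (0:ℝ) < 3)]
    calc Real.exp 1 ≤ 2.7182818286 := Real.exp_one_lt_d9.le
      _ ≤ 3 := by norm_num
  set A : ℝ → ℝ := fun y => ∫ z in (0:ℝ)..y, 2 * b z with hA
  -- interval integrability of 2b
  have h2b_int : ∀ p q : ℝ, IntervalIntegrable (fun z => 2 * b z) volume p q := by
    intro p q
    obtain ⟨M, hM⟩ := hb_loc (uIcc p q) isCompact_uIcc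
    rw [intervalIntegrable_iff]
    apply Measure.integrableOn_of_bounded (M := 2 * M) measure_Ioc_lt_top.ne
      ((hb_meas.const_mul 2).aestronglyMeasurable)
    apply (ae_restrict_iff' measurableSet_uIoc).2
    apply Filter.Eventually.of_forall
    intro z hz
    have := hM z (uIoc_subset_uIcc hz)
    calc ‖2 * b z‖ = 2 * |b z| := by rw [norm_mul, Real.norm_two, Real.norm_eq_abs]
      _ ≤ 2 * M := by linarith
  have hA_cont : Continuous A :=
    intervalIntegral.continuous_primitive h2b_int 0
  have hE_cont : Continuous fun y => Real.exp (-A y) :=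
    Real.continuous_exp.comp hA_cont.neg
  have hE_int : ∀ p q : ℝ, IntervalIntegrable (fun y => Real.exp (-A y)) volume p q :=
    fun p q => hE_cont.intervalIntegrable p q
  -- difference of u's as integral
  have hD : ∀ x : ℝ, u x - u (x - c) = ∫ y in (x - c)..x, Real.exp (-A y) := by
    intro x
    rw [hu x, hu (x - c)]
    exact integral_interval_sub_left (hE_int 0 x) (hE_int 0 (x - c))
  -- A-difference
  have hA_sub : ∀ p q : ℝ, A q - A p = ∫ z in p..q, 2 * b z := by
    intro p q
    exact integral_interval_sub_left (h2b_int 0 q) (h2b_int 0 p)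
  -- monotonicity of b on [3, ∞)
  have hb_mono : ∀ z x : ℝ, 3 ≤ z → z ≤ x → b z ≤ b x := by
    intro z x hz hzx
    rw [hb z hz, hb x (le_trans hz hzx)]
    have hlz : 0 < Real.log z := by
      have := le_trans hlog3 (Real.log_le_log (by norm_num) hz); linarith
    have h1 : Real.log z ≤ Real.log x := Real.log_le_log (by linarith) hzx
    have h2 : Real.log (Real.log z) ≤ Real.log (Real.log x) := Real.log_le_log hlz h1
    have hc1 : (0:ℝ) ≤ 1 / (2 * c) := by positivity
    have hc2 : (0:ℝ) ≤ 1 / c := by positivity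
    nlinarith
  -- positivity of log x for x ≥ 3
  have hbx_lb : ∀ x : ℝ, 3 ≤ x → (1 / c) * Real.log x ≤ 2 * b x := by
    intro x hx
    rw [hb x hx]
    have hlx : 1 ≤ Real.log x := le_trans hlog3 (Real.log_le_log (by norm_num) hx)
    have hll : 0 ≤ Real.log (Real.log x) := Real.log_nonneg hlx
    have hc2 : (0:ℝ) ≤ 1 / c := by positivity
    have h' : 2 * (1 / (2 * c) * Real.log x) = 1 / c * Real.log x := by
      field_simp
    linarith [mul_nonneg hc2 hll, h']
  -- main pointwise bound, for x ≥ 3 + c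
  have hmain : ∀ x : ℝ, 3 + c ≤ x →
      ENNReal.ofReal (1 / (c * x * Real.log x)) ≤
        ENNReal.ofReal (Real.exp (-A x) / (u x - u (x - c))) := by
    intro x hx3c
    have hx3 : (3:ℝ) ≤ x := by linarith
    have hxc3 : (3:ℝ) ≤ x - c := by linarith
    have hx0 : (0:ℝ) < x := by linarith
    have hlx : 1 ≤ Real.log x := le_trans hlog3 (Real.log_le_log (by norm_num) hx3)
    have hlx0 : 0 < Real.log x := by linarith
    set K : ℝ := 2 * b x with hK
    have hK_lb : (1 / c) * Real.log x ≤ K := hbx_lb x hx3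
    have hK_pos : 0 < K := lt_of_lt_of_le (by positivity) hK_lb
    -- pointwise bound on the integrand of D
    have hpt : ∀ y ∈ Icc (x - c) x, Real.exp (-A y) ≤
        Real.exp (-A x) * Real.exp ((x - y) * K) := by
      intro y hy
      have hy3 : (3:ℝ) ≤ y := le_trans hxc3 hy.1
      have hbound : A x - A y ≤ (x - y) * K := by
        rw [hA_sub y x]
        have hmono : ∀ z ∈ Icc y x, 2 * b z ≤ K := by
          intro z hz
          have : b z ≤ b x := hb_mono z x (le_trans hy3 hz.1) hz.2
          rw [hK]; linarith
        calc (∫ z in y..x, 2 * b z) ≤ ∫ _z in y..x, K :=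
              intervalIntegral.integral_mono_on hy.2 (h2b_int y x)
                (intervalIntegrable_const) hmono
          _ = (x - y) * K := by rw [intervalIntegral.integral_const]; simp [smul_eq_mul]
      rw [← Real.exp_add]
      apply Real.exp_le_exp.2
      linarith
    -- integral bound
    have hDle : u x - u (x - c) ≤ Real.exp (-A x) * (c * (x * Real.log x)) := by
      rw [hD x]
      have hxcx : x - c ≤ x := by linarith
      have step1 : (∫ y in (x - c)..x, Real.exp (-A y)) ≤
          ∫ y in (x - c)..x, Real.exp (-A x) * Real.exp ((x - y) * K) := by
        apply intervalIntegral.integral_mono_on hxcx (hE_int _ _)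
        · exact (Continuous.intervalIntegrable
            (continuous_const.mul (Real.continuous_exp.comp
              ((continuous_const.sub continuous_id).mul continuous_const))) _ _)
        · exact hpt
      have step2 : (∫ y in (x - c)..x, Real.exp (-A x) * Real.exp ((x - y) * K)) =
          Real.exp (-A x) * ((Real.exp (c * K) - 1) / K) := by
        rw [intervalIntegral.integral_const_mul]
        congr 1
        have hanti : ∀ y ∈ uIcc (x - c) x,
            HasDerivAt (fun y => -(Real.exp ((x - y) * K)) / K)
              (Real.exp ((x - y) * K)) y := by
          intro y _
          have h1 : HasDerivAt (fun y : ℝ => (x - y) * K) (-K) y := by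
            simpa using ((hasDerivAt_id y).const_sub x).mul_const K
          have h2 := (Real.hasDerivAt_exp ((x - y) * K)).comp y h1
          have h3 := (h2.neg).div_const K
          refine h3.congr_deriv ?_
          rw [mul_neg, neg_neg, mul_div_assoc, div_self hK_pos.ne', mul_one]
        rw [integral_eq_sub_of_hasDerivAt hanti
          (Continuous.intervalIntegrable (Real.continuous_exp.comp
            ((continuous_const.sub continuous_id).mul continuous_const)) _ _)]
        rw [show x - x = (0:ℝ) by ring, show x - (x - c) = c by ring, zero_mul,
          Real.exp_zero]
        field_simp
        ring
      have step3 : Real.exp (-A x) * ((Real.exp (c * K) - 1) / K) ≤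
          Real.exp (-A x) * (c * (x * Real.log x)) := by
        apply mul_le_mul_of_nonneg_left _ (Real.exp_pos _).le
        have hcK : c * K = Real.log x + 2 * Real.log (Real.log x) := by
          rw [hK, hb x hx3]
          field_simp
        have hexp : Real.exp (c * K) = x * (Real.log x) ^ 2 := by
          rw [hcK, Real.exp_add, Real.exp_log hx0]
          congr 1
          rw [show (2:ℝ) * Real.log (Real.log x) = Real.log (Real.log x) +
            Real.log (Real.log x) by ring, Real.exp_add, Real.exp_log hlx0]
          ring
        have h1 : (Real.exp (c * K) - 1) / K ≤ Real.exp (c * K) / K :=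
          div_le_div_of_nonneg_right (by linarith) hK_pos.le
        have h2 : Real.exp (c * K) / K ≤ Real.exp (c * K) / ((1 / c) * Real.log x) := by
          apply div_le_div_of_nonneg_left (Real.exp_pos _).le (by positivity) hK_lb
        have h3 : Real.exp (c * K) / ((1 / c) * Real.log x) = c * (x * Real.log x) := by
          rw [hexp]
          field_simp
        calc (Real.exp (c * K) - 1) / K ≤ Real.exp (c * K) / K := h1
          _ ≤ Real.exp (c * K) / ((1 / c) * Real.log x) := h2
          _ = c * (x * Real.log x) := h3
      calc (∫ y in (x - c)..x, Real.exp (-A y)) ≤ _ := step1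
        _ = _ := step2
        _ ≤ _ := step3
    have hD_pos : 0 < u x - u (x - c) := by
      rw [hD x]
      apply intervalIntegral_pos_of_pos (hE_int _ _) (fun y => Real.exp_pos _)
      linarith
    apply ENNReal.ofReal_le_ofReal
    have hM_pos : 0 < c * (x * Real.log x) := by positivity
    have key : Real.exp (-A x) / (Real.exp (-A x) * (c * (x * Real.log x))) ≤
        Real.exp (-A x) / (u x - u (x - c)) :=
      div_le_div_of_nonneg_left (Real.exp_pos _).le hD_pos hDle
    have heq : Real.exp (-A x) / (Real.exp (-A x) * (c * (x * Real.log x))) =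
        1 / (c * x * Real.log x) := by
      rw [div_mul_eq_div_div, div_self (ne_of_gt (Real.exp_pos _)), ← mul_assoc]
    rw [← heq]
    exact key
  -- conclude
  have hsub : Ici (3 + c) ⊆ Ici (3:ℝ) := fun x hx => le_trans (by linarith : (3:ℝ) ≤ 3 + c) hx
  rw [eq_top_iff]
  calc (⊤ : ℝ≥0∞) = ∫⁻ x in Ici (3 + c), ENNReal.ofReal (1 / (c * x * Real.log x)) :=
        (aux_lintegral_inv_mul_log_eq_top c (3 + c) hc (by linarith)).symm
    _ ≤ ∫⁻ x in Ici (3 + c), ENNReal.ofReal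
          (Real.exp (-A x) / (u x - u (x - c))) := by
        apply lintegral_mono_ae
        apply (ae_restrict_iff' measurableSet_Ici).2
        exact Filter.Eventually.of_forall (fun x hx => hmain x hx)
    _ ≤ ∫⁻ x in Ici (3:ℝ), ENNReal.ofReal
          (Real.exp (-A x) / (u x - u (x - c))) := lintegral_mono_set hsub
end

section
/- Let c > 0 and let b : ℝ → ℝ be locally bounded and measurable. Suppose there exist γ > 1 and x₀ ≥ 3 such that b(x) ≥ (1/(2c))·log x + (γ/c)·log(log x) for all x ≥ x₀. Define u(x) = ∫₀ˣ exp(−∫₀ʸ 2b(z) dz) dy. Then ∫_{x₀}^∞ exp(−∫₀ˣ 2b(y) dy) / (u(x) − u(x − c)) dx < ∞. -/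
open Real MeasureTheory intervalIntegral Set Filter Topology

private lemma one_lt_log_three : 1 < Real.log 3 := by
  have h1 : Real.exp 1 < 3 := by
    have h := Real.exp_one_lt_d9
    norm_num at h
    linarith
  calc (1:ℝ) = Real.log (Real.exp 1) := (Real.log_exp 1).symm
    _ < Real.log 3 := Real.log_lt_log (Real.exp_pos 1) h1

private lemma phi_mono (c γ : ℝ) (hc : 0 < c) (hγ : 1 < γ) {a b : ℝ} (ha : 3 ≤ a)
    (hab : a ≤ b) :
    (1/(2*c)) * Real.log a + (γ/c) * Real.log (Real.log a)
      ≤ (1/(2*c)) * Real.log b + (γ/c) * Real.log (Real.log b) := by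
  have ha0 : (0:ℝ) < a := by linarith
  have hla : 1 < Real.log a := lt_of_lt_of_le one_lt_log_three (Real.log_le_log (by norm_num) ha)
  have h1 : Real.log a ≤ Real.log b := Real.log_le_log ha0 hab
  have h2 : Real.log (Real.log a) ≤ Real.log (Real.log b) :=
    Real.log_le_log (by linarith) h1
  have hc1 : (0:ℝ) ≤ 1/(2*c) := by positivity
  have hc2 : (0:ℝ) ≤ γ/c := by positivity
  nlinarith

private lemma aux_integrable_bound (c a p : ℝ) (hp : 1 < p) (ha : 3 ≤ a - c) :
    IntegrableOn (fun x => ((x - c) * Real.log (x - c) ^ p)⁻¹) (Ici a) := by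
  rw [integrableOn_Ici_iff_integrableOn_Ioi]
  have key : ∀ x ∈ Ici a, HasDerivAt (fun y => -(p-1)⁻¹ * Real.log (y - c) ^ (1 - p))
      (((x - c) * Real.log (x - c) ^ p)⁻¹) x := by
    intro x hx
    have hx3 : 3 ≤ x - c := by simp only [mem_Ici] at hx; linarith
    have hx0 : (0:ℝ) < x - c := by linarith
    have hlx : 1 < Real.log (x - c) :=
      lt_of_lt_of_le one_lt_log_three (Real.log_le_log (by norm_num) hx3)
    have hlpos : 0 < Real.log (x - c) := by linarith
    have hd1 : HasDerivAt (fun y : ℝ => y - c) 1 x := (hasDerivAt_id x).sub_const c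
    have hd2 : HasDerivAt (fun y : ℝ => Real.log (y - c)) (1 / (x - c)) x :=
      hd1.log (ne_of_gt hx0)
    have hd3 := hd2.rpow_const (p := 1 - p) (Or.inl (ne_of_gt hlpos))
    have hd4 := hd3.const_mul (-(p-1)⁻¹)
    refine hd4.congr_deriv ?_
    symm
    rw [show (1 - p - 1) = -p by ring, Real.rpow_neg hlpos.le, mul_inv]
    have hxne : (x - c)⁻¹ ≠ 0 := inv_ne_zero (ne_of_gt hx0)
    have hpne : p - 1 ≠ 0 := (by linarith : (0:ℝ) < p - 1).ne'
    field_simp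
    ring
  have hpos : ∀ x ∈ Ioi a, 0 ≤ ((x - c) * Real.log (x - c) ^ p)⁻¹ := by
    intro x hx
    have hx3 : 3 ≤ x - c := by simp only [mem_Ioi] at hx; linarith
    have hx0 : (0:ℝ) < x - c := by linarith
    have : (0:ℝ) ≤ Real.log (x - c) := Real.log_nonneg (by linarith)
    positivity
  have htend : Tendsto (fun x => -(p-1)⁻¹ * Real.log (x - c) ^ (1 - p)) atTop (𝓝 0) := by
    have hlog : Tendsto (fun x : ℝ => Real.log (x - c)) atTop atTop := by
      apply Real.tendsto_log_atTop.comp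
      simpa [sub_eq_add_neg] using tendsto_atTop_add_const_right atTop (-c) tendsto_id
    have h2 : Tendsto (fun x : ℝ => Real.log (x - c) ^ (1 - p)) atTop (𝓝 0) := by
      have := (tendsto_rpow_neg_atTop (by linarith : (0:ℝ) < p - 1)).comp hlog
      simpa [Function.comp_def, show -(p-1) = 1 - p by ring] using this
    simpa using h2.const_mul (-(p-1)⁻¹)
  exact integrableOn_Ioi_deriv_of_nonneg' key hpos htend

set_option maxHeartbeats 1000000 in
private lemma aux_main (c γ x₀ : ℝ) (hc : 0 < c) (hγ : 1 < γ) (hx₀ : 3 ≤ x₀)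
    (F u : ℝ → ℝ) (hFc : Continuous F)
    (hdrift : ∀ y z : ℝ, x₀ ≤ y → y ≤ z →
      2 * ((1/(2*c)) * Real.log y + (γ/c) * Real.log (Real.log y)) * (z - y) ≤ F z - F y)
    (hu : ∀ x, u x = ∫ y in (0:ℝ)..x, Real.exp (-F y)) :
    IntegrableOn (fun x => Real.exp (-F x) / (u x - u (x - c))) (Ici x₀) := by
  have hfc : Continuous fun x => Real.exp (-F x) := Real.continuous_exp.comp hFc.neg
  have hfi : ∀ a₁ a₂ : ℝ, IntervalIntegrable (fun x => Real.exp (-F x)) volume a₁ a₂ :=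
    fun a₁ a₂ => hfc.intervalIntegrable _ _
  have hdiff : ∀ x : ℝ, u x - u (x - c) = ∫ y in (x - c)..x, Real.exp (-F y) := by
    intro x
    rw [hu, hu]
    exact integral_interval_sub_left (hfi 0 x) (hfi 0 (x - c))
  have hden : ∀ x : ℝ, 0 < u x - u (x - c) := by
    intro x
    rw [hdiff]
    exact intervalIntegral_pos_of_pos (hfi _ _) (fun y => Real.exp_pos _) (by linarith)
  have huc : Continuous u := by
    have : u = fun x => ∫ y in (0:ℝ)..x, Real.exp (-F y) := funext hu
    rw [this]
    exact intervalIntegral.continuous_primitive hfi 0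
  have hgc : Continuous fun x => Real.exp (-F x) / (u x - u (x - c)) :=
    hfc.div (huc.sub (huc.comp (continuous_id.sub continuous_const)))
      fun x => (hden x).ne'
  set p : ℝ := 2*γ - 1 with hpdef
  clear_value p
  have hp : 1 < p := by simp only [hpdef]; linarith
  set A : ℝ := 6 * (1/(2*c) + γ/c) with hAdef
  clear_value A
  -- key pointwise bound
  have key : ∀ x ∈ Ici (x₀ + c),
      Real.exp (-F x) / (u x - u (x - c)) ≤ A * ((x - c) * Real.log (x - c) ^ p)⁻¹ := by
    intro x hx
    simp only [mem_Ici] at hx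
    have ht3 : 3 ≤ x - c := by linarith
    have htx0 : x₀ ≤ x - c := by linarith
    have ht0 : (0:ℝ) < x - c := by linarith
    set s : ℝ := Real.log (x - c) with hsdef
    clear_value s
    have hs1 : 1 < s := hsdef ▸
      lt_of_lt_of_le one_lt_log_three (Real.log_le_log (by norm_num) ht3)
    have hs0 : 0 < s := by linarith
    set m : ℝ := 1/(2*c) * s + γ/c * Real.log s with hmdef
    clear_value m
    have hlogs0 : 0 ≤ Real.log s := Real.log_nonneg hs1.le
    have hm0 : 1/(2*c) ≤ m := by
      have h1 : 1/(2*c) * 1 ≤ 1/(2*c) * s := by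
        apply mul_le_mul_of_nonneg_left hs1.le (by positivity)
      have h2 : 0 ≤ γ/c * Real.log s := by positivity
      simp only [hmdef]; nlinarith
    have hmpos : 0 < m := lt_of_lt_of_le (by positivity) hm0
    have h2mc : 1 ≤ 2*m*c := by
      have hcc : (0:ℝ) < 2*c := by positivity
      have h := mul_le_mul_of_nonneg_left hm0 hcc.le
      have e : 2*c*(1/(2*c)) = 1 := by field_simp
      nlinarith [h, e]
    have hδc : (2*m)⁻¹ ≤ c := by
      rw [← one_div, div_le_iff₀ (by positivity : (0:ℝ) < 2*m)]
      nlinarith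
    have hδ0 : (0:ℝ) < (2*m)⁻¹ := by positivity
    -- Step A
    have hA : ∀ y ∈ Icc (x - c) (x - c + (2*m)⁻¹),
        Real.exp (-F x) * Real.exp (2*m*c - 1) ≤ Real.exp (-F y) := by
      intro y hy
      have hyx : y ≤ x := by
        have := hy.2; linarith [hδc]
      have hylb : x - c ≤ y := hy.1
      have hyx0 : x₀ ≤ y := le_trans htx0 hylb
      have hFlb : 2*m*(x - y) ≤ F x - F y := by
        have h1 := hdrift y x hyx0 hyx
        have h2 : m ≤ 1/(2*c) * Real.log y + γ/c * Real.log (Real.log y) := by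
          simpa [hmdef, hsdef] using phi_mono c γ hc hγ ht3 hylb
        nlinarith [h1, mul_le_mul_of_nonneg_right h2 (sub_nonneg.mpr hyx)]
      have hexpe : 2*m*c - 1 ≤ F x - F y := by
        have h2mδ : 2*m*(2*m)⁻¹ = 1 := mul_inv_cancel₀ (by positivity)
        have hxy : c - (2*m)⁻¹ ≤ x - y := by linarith [hy.2]
        nlinarith [hFlb, mul_le_mul_of_nonneg_left hxy (by positivity : (0:ℝ) ≤ 2*m), h2mδ]
      calc Real.exp (-F x) * Real.exp (2*m*c - 1)
          = Real.exp (-F x + (2*m*c - 1)) := (Real.exp_add _ _).symm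
        _ ≤ Real.exp (-F y) := Real.exp_le_exp.2 (by linarith)
    -- Step B
    have hB : (2*m)⁻¹ * (Real.exp (-F x) * Real.exp (2*m*c - 1)) ≤ u x - u (x - c) := by
      rw [hdiff]
      have hsplit : (∫ y in (x-c)..(x-c+(2*m)⁻¹), Real.exp (-F y))
            + ∫ y in (x-c+(2*m)⁻¹)..x, Real.exp (-F y)
          = ∫ y in (x-c)..x, Real.exp (-F y) :=
        integral_add_adjacent_intervals (hfi _ _) (hfi _ _)
      have h2 : 0 ≤ ∫ y in (x-c+(2*m)⁻¹)..x, Real.exp (-F y) :=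
        intervalIntegral.integral_nonneg (by linarith [hδc])
          (fun y _ => (Real.exp_pos _).le)
      have h1 : (2*m)⁻¹ * (Real.exp (-F x) * Real.exp (2*m*c - 1))
          ≤ ∫ y in (x-c)..(x-c+(2*m)⁻¹), Real.exp (-F y) := by
        have hmono := intervalIntegral.integral_mono_on
          (by linarith : x - c ≤ x - c + (2*m)⁻¹)
          (_root_.intervalIntegrable_const
            (c := Real.exp (-F x) * Real.exp (2*m*c - 1)))
          (hfi _ _) hA
        rw [intervalIntegral.integral_const, smul_eq_mul,
          show x - c + (2*m)⁻¹ - (x - c) = (2*m)⁻¹ by ring] at hmono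
        exact hmono
      linarith
    -- Step C: conclude
    have hexp2mc : Real.exp (2*m*c) = (x - c) * s ^ (2*γ) := by
      have h1 : 2*m*c = s + 2*γ * Real.log s := by
        simp only [hmdef]; field_simp
      rw [h1, Real.exp_add, Real.rpow_def_of_pos hs0, mul_comm (Real.log s) (2*γ),
        hsdef, Real.exp_log ht0]
    have hspow : s ^ (2*γ) = s ^ p * s := by
      rw [show (2*γ) = p + 1 by simp only [hpdef]; ring, Real.rpow_add hs0, Real.rpow_one]
    have hsp_pos : 0 < s ^ p := Real.rpow_pos_of_pos hs0 p
    have hfx_pos : 0 < Real.exp (-F x) := Real.exp_pos _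
    have hdenlb : 0 < (2*m)⁻¹ * (Real.exp (-F x) * Real.exp (2*m*c - 1)) := by positivity
    have step1 : Real.exp (-F x) / (u x - u (x - c))
        ≤ Real.exp (-F x) / ((2*m)⁻¹ * (Real.exp (-F x) * Real.exp (2*m*c - 1))) :=
      div_le_div_of_nonneg_left hfx_pos.le hdenlb hB
    have step2 : Real.exp (-F x) / ((2*m)⁻¹ * (Real.exp (-F x) * Real.exp (2*m*c - 1)))
        = 2*m * Real.exp 1 * (Real.exp (2*m*c))⁻¹ := by
      rw [show Real.exp (2*m*c - 1) = Real.exp (2*m*c) / Real.exp 1 from by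
        rw [Real.exp_sub]]
      field_simp [Real.exp_ne_zero, hmpos.ne']
    have hexp1 : Real.exp 1 ≤ 3 := by
      have h := Real.exp_one_lt_d9; norm_num at h; linarith
    have hm_ub : m ≤ (1/(2*c) + γ/c) * s := by
      have hls : Real.log s ≤ s := by
        have := Real.log_le_sub_one_of_pos hs0; linarith
      have hγc : (0:ℝ) ≤ γ/c := by positivity
      simp only [hmdef]
      nlinarith
    have step3 : 2*m * Real.exp 1 * (Real.exp (2*m*c))⁻¹
        ≤ A * ((x - c) * s ^ p)⁻¹ := by
      rw [hexp2mc, hspow]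
      have hinv_pos : (0:ℝ) < ((x - c) * (s ^ p * s))⁻¹ := by positivity
      have h1 : 2*m * Real.exp 1 ≤ 6 * ((1/(2*c) + γ/c) * s) := by
        have h2 : 0 < 1/(2*c) + γ/c := by positivity
        nlinarith [hm_ub, hmpos, hexp1, Real.exp_pos 1]
      calc 2*m * Real.exp 1 * ((x - c) * (s ^ p * s))⁻¹
          ≤ 6 * ((1/(2*c) + γ/c) * s) * ((x - c) * (s ^ p * s))⁻¹ :=
            mul_le_mul_of_nonneg_right h1 hinv_pos.le
        _ = A * ((x - c) * s ^ p)⁻¹ := by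
            simp only [hAdef]
            rw [show (x - c) * (s ^ p * s) = ((x - c) * s ^ p) * s by ring, mul_inv]
            field_simp [hs0.ne', ht0.ne', hsp_pos.ne']
    calc Real.exp (-F x) / (u x - u (x - c))
        ≤ Real.exp (-F x) / ((2*m)⁻¹ * (Real.exp (-F x) * Real.exp (2*m*c - 1))) := step1
      _ = 2*m * Real.exp 1 * (Real.exp (2*m*c))⁻¹ := step2
      _ ≤ A * ((x - c) * s ^ p)⁻¹ := step3
  -- assemble
  have hsplitset : Ici x₀ = Icc x₀ (x₀ + c) ∪ Ici (x₀ + c) :=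
    (Icc_union_Ici_eq_Ici (by linarith)).symm
  rw [hsplitset]
  apply IntegrableOn.union
  · exact hgc.continuousOn.integrableOn_Icc
  · have hbd := (aux_integrable_bound c (x₀ + c) p hp (by linarith)).const_mul A
    apply Integrable.mono' hbd (hgc.aestronglyMeasurable.restrict)
    rw [ae_restrict_iff' measurableSet_Ici]
    apply ae_of_all
    intro x hx
    rw [Real.norm_eq_abs, abs_of_nonneg (div_nonneg (Real.exp_pos _).le (hden x).le)]
    exact key x hx

/-- Theorem 2(i), analytic content: if `b(x) ≥ (1/(2c))·log x + (γ/c)·log log x` for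
some `γ > 1` and all large `x`, then the down-crossing criterion integral is finite. -/
theorem criterion_finite_of_large_drift
    (c : ℝ) (hc : 0 < c)
    (b : ℝ → ℝ) (hb_meas : Measurable b)
    (hb_loc : ∀ K : Set ℝ, IsCompact K → ∃ M, ∀ x ∈ K, |b x| ≤ M)
    (γ x₀ : ℝ) (hγ : 1 < γ) (hx₀ : 3 ≤ x₀)
    (hb : ∀ x : ℝ, x₀ ≤ x →
      (1 / (2 * c)) * Real.log x + (γ / c) * Real.log (Real.log x) ≤ b x)
    (u : ℝ → ℝ)
    (hu : ∀ x, u x = ∫ y in (0:ℝ)..x, Real.exp (-∫ z in (0:ℝ)..y, 2 * b z)) :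
    IntegrableOn
      (fun x => Real.exp (-∫ y in (0:ℝ)..x, 2 * b y) / (u x - u (x - c)))
      (Ici x₀) := by
  have hbi : ∀ a₁ a₂ : ℝ, IntervalIntegrable (fun z => 2 * b z) volume a₁ a₂ := by
    intro a₁ a₂
    obtain ⟨M, hM⟩ := hb_loc (uIcc a₁ a₂) isCompact_uIcc
    rw [intervalIntegrable_iff]
    apply Integrable.mono' (g := fun _ => 2 * M)
      (integrableOn_const measure_Ioc_lt_top.ne)
      ((hb_meas.const_mul 2).aestronglyMeasurable.restrict)
    rw [ae_restrict_iff' measurableSet_Ioc]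
    apply ae_of_all
    intro z hz
    have hz' : z ∈ Icc (a₁ ⊓ a₂) (a₁ ⊔ a₂) := Ioc_subset_Icc_self hz
    have := hM z hz'
    rw [Real.norm_eq_abs, abs_mul]
    calc |2| * |b z| = 2 * |b z| := by norm_num
      _ ≤ 2 * M := by nlinarith [abs_nonneg (b z)]
  have hFc : Continuous fun x => ∫ z in (0:ℝ)..x, 2 * b z :=
    intervalIntegral.continuous_primitive hbi 0
  have hdrift : ∀ y z : ℝ, x₀ ≤ y → y ≤ z →
      2 * ((1/(2*c)) * Real.log y + (γ/c) * Real.log (Real.log y)) * (z - y)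
        ≤ (∫ w in (0:ℝ)..z, 2 * b w) - ∫ w in (0:ℝ)..y, 2 * b w := by
    intro y z hy hyz
    rw [show ((∫ w in (0:ℝ)..z, 2 * b w) - ∫ w in (0:ℝ)..y, 2 * b w)
        = ∫ w in y..z, 2 * b w from integral_interval_sub_left (hbi 0 z) (hbi 0 y)]
    have hmono : (∫ w in y..z, 2 * ((1/(2*c)) * Real.log y + (γ/c) * Real.log (Real.log y)))
        ≤ ∫ w in y..z, 2 * b w := by
      apply intervalIntegral.integral_mono_on hyz intervalIntegrable_const (hbi y z)
      intro w hw
      have hyw : y ≤ w := hw.1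
      have hw0 : x₀ ≤ w := le_trans hy hyw
      have h1 := phi_mono c γ hc hγ (le_trans hx₀ hy) hyw
      have h2 := hb w hw0
      nlinarith
    rw [intervalIntegral.integral_const, smul_eq_mul] at hmono
    nlinarith [hmono]
  exact aux_main c γ x₀ hc hγ hx₀ (fun x => ∫ z in (0:ℝ)..x, 2 * b z) u hFc hdrift hu
end

section
/- Let b : ℝ → ℝ be locally bounded and measurable with liminf_{x→∞} b(x)/log x = ∞. Define u(x) = ∫₀ˣ exp(−∫₀ʸ 2b(z) dz) dy. Then for every c > 0 one has ∫_3^∞ exp(−∫₀ˣ 2b(y) dy) / (u(x) − u(x − c)) dx < ∞. -/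
open Real MeasureTheory intervalIntegral Set Filter

/-- Theorem 2(iii), analytic content: if `liminf_{x→∞} b(x)/log x = ∞`, then the
down-crossing criterion integral is finite for every `c > 0`. -/
theorem criterion_finite_of_superlog_drift
    (b : ℝ → ℝ) (hb_meas : Measurable b)
    (hb_loc : ∀ K : Set ℝ, IsCompact K → ∃ M, ∀ x ∈ K, |b x| ≤ M)
    (hliminf : liminf (fun x : ℝ => ((b x / Real.log x : ℝ) : EReal)) atTop = ⊤)
    (u : ℝ → ℝ)
    (hu : ∀ x, u x = ∫ y in (0:ℝ)..x, Real.exp (-∫ z in (0:ℝ)..y, 2 * b z)) :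
    ∀ c : ℝ, 0 < c →
      IntegrableOn
        (fun x => Real.exp (-∫ y in (0:ℝ)..x, 2 * b y) / (u x - u (x - c)))
        (Ici (3:ℝ)) := by
  intro c hc
  -- the drift is interval integrable
  have hbi : ∀ a a' : ℝ, IntervalIntegrable (fun z => 2 * b z) volume a a' := by
    intro a a'
    obtain ⟨M, hM⟩ := hb_loc (uIcc a a') isCompact_uIcc
    rw [intervalIntegrable_iff]
    refine Measure.integrableOn_of_bounded (M := 2 * |M|) measure_Ioc_lt_top.ne
      ((hb_meas.const_mul 2).aestronglyMeasurable) ?_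
    refine (ae_restrict_iff' measurableSet_uIoc).mpr (Eventually.of_forall fun x hx => ?_)
    have hx' : x ∈ uIcc a a' := uIoc_subset_uIcc hx
    have := hM x hx'
    have h1 : |b x| ≤ |M| := this.trans (le_abs_self M)
    calc ‖2 * b x‖ = 2 * |b x| := by rw [Real.norm_eq_abs, abs_mul]; norm_num
    _ ≤ 2 * |M| := by linarith
  obtain ⟨F, hFdef⟩ : ∃ F : ℝ → ℝ, ∀ x, F x = ∫ z in (0:ℝ)..x, 2 * b z :=
    ⟨fun x => ∫ z in (0:ℝ)..x, 2 * b z, fun _ => rfl⟩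
  have hFcont : Continuous F := by
    rw [funext hFdef]; exact intervalIntegral.continuous_primitive hbi 0
  have hgcont : Continuous fun y => Real.exp (-F y) := Real.continuous_exp.comp hFcont.neg
  have hgint : ∀ a a' : ℝ, IntervalIntegrable (fun y => Real.exp (-F y)) volume a a' :=
    fun a a' => hgcont.intervalIntegrable a a'
  have hgpos : ∀ y : ℝ, 0 < Real.exp (-F y) := fun y => Real.exp_pos _
  have hdiff : ∀ x : ℝ, u x - u (x - c) = ∫ y in (x - c)..x, Real.exp (-F y) := by
    intro x
    rw [hu x, hu (x - c)]
    simp only [← hFdef]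
    exact integral_interval_sub_left (hgint 0 x) (hgint 0 (x - c))
  have hden_pos : ∀ x : ℝ, 0 < u x - u (x - c) := by
    intro x
    rw [hdiff]
    exact intervalIntegral_pos_of_pos (hgint _ _) hgpos (by linarith)
  have hucont : Continuous u := by
    have : u = fun x => ∫ y in (0:ℝ)..x, Real.exp (-F y) := by
      funext x; rw [hu x]; simp only [← hFdef]
    rw [this]
    exact intervalIntegral.continuous_primitive hgint 0
  have hfcont : Continuous fun x => Real.exp (-F x) / (u x - u (x - c)) :=
    hgcont.div (hucont.sub (hucont.comp (continuous_id.sub continuous_const)))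
      (fun x => (hden_pos x).ne')
  -- eventual superlogarithmic growth
  set K : ℝ := 2 / c with hK
  have hKpos : 0 < K := by positivity
  have hev : ∀ᶠ x : ℝ in atTop, (K : EReal) < ((b x / Real.log x : ℝ) : EReal) :=
    eventually_lt_of_lt_liminf (by rw [hliminf]; exact EReal.coe_lt_top K)
      (isBoundedUnder_of ⟨⊥, fun x => bot_le⟩)
  obtain ⟨X₁, hX₁⟩ := eventually_atTop.mp hev
  set X₀ : ℝ := max X₁ 3 with hX₀
  set A : ℝ := X₀ + 3 * c + 3 with hA
  have hA3 : (3:ℝ) ≤ A := by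
    have := le_max_right X₁ 3
    simp only [hA]; linarith
  have hApos : (0:ℝ) < A := by linarith
  -- the key pointwise bound for x ≥ A
  have hbound : ∀ x : ℝ, A ≤ x →
      Real.exp (-F x) / (u x - u (x - c)) ≤ (8 / c) * x ^ (-2:ℝ) := by
    intro x hx
    have hX₀3 : (3:ℝ) ≤ X₀ := le_max_right X₁ 3
    have hX₀1 : X₁ ≤ X₀ := le_max_left X₁ 3
    have hxc3 : (3:ℝ) ≤ x - c := by simp only [hA] at hx; linarith
    have hxcpos : (0:ℝ) < x - c := by linarith
    have hx2c : 2 * c ≤ x := by simp only [hA] at hx; linarith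
    have hlogpos : 0 < Real.log (x - c) := Real.log_pos (by linarith)
    have hlog1 : 1 ≤ Real.log (x - c) := by
      have : Real.exp 1 ≤ x - c := by
        have := Real.exp_one_lt_d9
        linarith
      calc (1:ℝ) = Real.log (Real.exp 1) := (Real.log_exp 1).symm
      _ ≤ Real.log (x - c) := Real.log_le_log (Real.exp_pos 1) this
    -- lower bound for b on [x - c, x]
    have hblow : ∀ z ∈ Icc (x - c) x, 2 * (K * Real.log (x - c)) ≤ 2 * b z := by
      intro z hz
      have hz1 : x - c ≤ z := hz.1
      have hzX₁ : X₁ ≤ z := by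
        simp only [hA] at hx; linarith
      have hzlogpos : 0 < Real.log z := Real.log_pos (by linarith)
      have hKb : K < b z / Real.log z := by
        have := hX₁ z hzX₁
        exact_mod_cast this
      have h1 : K * Real.log z < b z := (lt_div_iff₀ hzlogpos).mp hKb
      have h2 : Real.log (x - c) ≤ Real.log z := Real.log_le_log hxcpos hz1
      nlinarith
    -- lower bound for exp (-F y) on [x - c, x - c/2]
    have hexp : ∀ y ∈ Icc (x - c) (x - c / 2),
        Real.exp (-F x) * (x - c) ^ (2:ℝ) ≤ Real.exp (-F y) := by
      intro y hy
      have hy1 : x - c ≤ y := hy.1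
      have hy2 : y ≤ x - c / 2 := hy.2
      have hyx : y ≤ x := by linarith
      have hFsub : F x - F y = ∫ z in y..x, 2 * b z := by
        rw [hFdef x, hFdef y]
        exact integral_interval_sub_left (hbi 0 x) (hbi 0 y)
      have hIcc : Icc y x ⊆ Icc (x - c) x := Icc_subset_Icc hy1 le_rfl
      have hmono : (∫ _ in y..x, 2 * (K * Real.log (x - c))) ≤ ∫ z in y..x, 2 * b z :=
        intervalIntegral.integral_mono_on hyx (intervalIntegrable_const) (hbi y x)
          (fun z hz => hblow z (hIcc hz))
      rw [intervalIntegral.integral_const] at hmono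
      have hconst : 2 * Real.log (x - c) ≤ (x - y) • (2 * (K * Real.log (x - c))) := by
        rw [smul_eq_mul]
        have hxy : c / 2 ≤ x - y := by linarith
        have h0 : 0 ≤ 2 * (K * Real.log (x - c)) := by positivity
        have h1 : c / 2 * (2 * (K * Real.log (x - c))) ≤
            (x - y) * (2 * (K * Real.log (x - c))) := mul_le_mul_of_nonneg_right hxy h0
        have h2 : c / 2 * (2 * (K * Real.log (x - c))) = 2 * Real.log (x - c) := by
          rw [hK]; field_simp
        linarith
      have hFxy : 2 * Real.log (x - c) ≤ F x - F y := by
        rw [hFsub]; exact hconst.trans hmono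
      have : Real.exp (-F x + 2 * Real.log (x - c)) ≤ Real.exp (-F y) := by
        apply Real.exp_le_exp.mpr
        linarith
      calc Real.exp (-F x) * (x - c) ^ (2:ℝ)
          = Real.exp (-F x) * Real.exp (Real.log (x - c) * 2) := by
            rw [Real.rpow_def_of_pos hxcpos]
        _ = Real.exp (-F x + 2 * Real.log (x - c)) := by
            rw [← Real.exp_add]; ring_nf
        _ ≤ Real.exp (-F y) := this
    -- lower bound for the denominator
    have hdenlow : c / 2 * (Real.exp (-F x) * (x - c) ^ (2:ℝ)) ≤ u x - u (x - c) := by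
      rw [hdiff x]
      have hsplit : (∫ y in (x - c)..(x - c / 2), Real.exp (-F y)) +
          (∫ y in (x - c / 2)..x, Real.exp (-F y)) = ∫ y in (x - c)..x, Real.exp (-F y) :=
        integral_add_adjacent_intervals (hgint _ _) (hgint _ _)
      have h2nn : 0 ≤ ∫ y in (x - c / 2)..x, Real.exp (-F y) :=
        intervalIntegral.integral_nonneg (by linarith) (fun y _ => (hgpos y).le)
      have h1 : (∫ _ in (x - c)..(x - c / 2), Real.exp (-F x) * (x - c) ^ (2:ℝ)) ≤
          ∫ y in (x - c)..(x - c / 2), Real.exp (-F y) :=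
        intervalIntegral.integral_mono_on (by linarith) intervalIntegrable_const (hgint _ _)
          hexp
      rw [intervalIntegral.integral_const] at h1
      have heq : (x - c / 2 - (x - c)) • (Real.exp (-F x) * (x - c) ^ (2:ℝ)) =
          c / 2 * (Real.exp (-F x) * (x - c) ^ (2:ℝ)) := by
        rw [smul_eq_mul]; ring_nf
      rw [heq] at h1
      linarith
    -- conclude
    have hdpos : 0 < c / 2 * (Real.exp (-F x) * (x - c) ^ (2:ℝ)) := by
      have := Real.rpow_pos_of_pos hxcpos (2:ℝ)
      have := hgpos x
      positivity
    have hstep : Real.exp (-F x) / (u x - u (x - c)) ≤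
        Real.exp (-F x) / (c / 2 * (Real.exp (-F x) * (x - c) ^ (2:ℝ))) :=
      div_le_div_of_nonneg_left (hgpos x).le hdpos hdenlow
    have hsimp : Real.exp (-F x) / (c / 2 * (Real.exp (-F x) * (x - c) ^ (2:ℝ))) =
        (2 / c) * ((x - c) ^ (2:ℝ))⁻¹ := by
      rw [eq_comm]
      field_simp
    have hxpos : (0:ℝ) < x := by linarith
    have hhalf : x / 2 ≤ x - c := by linarith
    have hsq : (x / 2) ^ (2:ℝ) ≤ (x - c) ^ (2:ℝ) :=
      Real.rpow_le_rpow (by positivity) hhalf (by norm_num)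
    have hinv : ((x - c) ^ (2:ℝ))⁻¹ ≤ ((x / 2) ^ (2:ℝ))⁻¹ := by
      apply inv_anti₀
      · exact Real.rpow_pos_of_pos (by positivity) _
      · exact hsq
    have hrp2 : ∀ t : ℝ, 0 ≤ t → t ^ (2:ℝ) = t ^ 2 := fun t ht => by
      rw [show (2:ℝ) = ((2:ℕ):ℝ) by norm_num, Real.rpow_natCast]
    have hfin : (2 / c) * ((x / 2) ^ (2:ℝ))⁻¹ = (8 / c) * x ^ (-2:ℝ) := by
      rw [Real.rpow_neg hxpos.le, hrp2 (x / 2) (by positivity), hrp2 x hxpos.le]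
      field_simp
      ring
    calc Real.exp (-F x) / (u x - u (x - c))
        ≤ Real.exp (-F x) / (c / 2 * (Real.exp (-F x) * (x - c) ^ (2:ℝ))) := hstep
      _ = (2 / c) * ((x - c) ^ (2:ℝ))⁻¹ := hsimp
      _ ≤ (2 / c) * ((x / 2) ^ (2:ℝ))⁻¹ := by
          apply mul_le_mul_of_nonneg_left hinv (by positivity)
      _ = (8 / c) * x ^ (-2:ℝ) := hfin
  -- assemble integrability
  simp only [← hFdef]
  have hI1 : IntegrableOn (fun x => Real.exp (-F x) / (u x - u (x - c))) (Icc 3 A) :=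
    hfcont.integrableOn_Icc
  have hgI : IntegrableOn (fun x => (8 / c) * x ^ (-2:ℝ)) (Ioi A) :=
    (integrableOn_Ioi_rpow_of_lt (by norm_num) hApos).const_mul (8 / c)
  have hI2 : IntegrableOn (fun x => Real.exp (-F x) / (u x - u (x - c))) (Ioi A) := by
    refine Integrable.mono' hgI (hfcont.aestronglyMeasurable.restrict) ?_
    refine (ae_restrict_iff' measurableSet_Ioi).mpr (Eventually.of_forall fun x hx => ?_)
    have hxA : A ≤ x := le_of_lt hx
    have hpos : 0 < Real.exp (-F x) / (u x - u (x - c)) :=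
      div_pos (hgpos x) (hden_pos x)
    rw [Real.norm_eq_abs, abs_of_pos hpos]
    exact hbound x hxA
  have hsub : Ici (3:ℝ) ⊆ Icc 3 A ∪ Ioi A := by
    intro x hx
    rcases le_or_gt x A with h | h
    · exact Or.inl ⟨hx, h⟩
    · exact Or.inr h
  exact (hI1.union hI2).mono_set hsub
end

section
/- Let b : ℝ → ℝ be locally bounded and measurable with limsup_{x→∞} b(x)/log x = 0. Define u(x) = ∫₀ˣ exp(−∫₀ʸ 2b(z) dz) dy. Then for every c > 0 one has ∫_3^∞ exp(−∫₀ˣ 2b(y) dy) / (u(x) − u(x − c)) dx = ∞. -/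
open Real MeasureTheory intervalIntegral Set Filter

/-- Theorem 2(iv), analytic content: if `limsup_{x→∞} b(x)/log x = 0`, then the
down-crossing criterion integral diverges for every `c > 0`. -/
theorem criterion_infinite_of_sublog_drift
    (b : ℝ → ℝ) (hb_meas : Measurable b)
    (hb_loc : ∀ K : Set ℝ, IsCompact K → ∃ M, ∀ x ∈ K, |b x| ≤ M)
    (hlimsup : limsup (fun x : ℝ => ((b x / Real.log x : ℝ) : EReal)) atTop = 0)
    (u : ℝ → ℝ)
    (hu : ∀ x, u x = ∫ y in (0:ℝ)..x, Real.exp (-∫ z in (0:ℝ)..y, 2 * b z)) :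
    ∀ c : ℝ, 0 < c →
      ∫⁻ x in Ici (3:ℝ),
        ENNReal.ofReal
          (Real.exp (-∫ y in (0:ℝ)..x, 2 * b y) / (u x - u (x - c))) = ⊤ := by
  intro c hc
  -- `2 * b` is interval integrable on every interval
  have hbint : ∀ a d : ℝ, IntervalIntegrable (fun z => 2 * b z) volume a d := by
    intro a d
    obtain ⟨M, hM⟩ := hb_loc (uIcc a d) isCompact_uIcc
    rw [intervalIntegrable_iff]
    apply Measure.integrableOn_of_bounded (M := 2 * M)
    · exact measure_Ioc_lt_top.ne
    · exact (hb_meas.const_mul 2).aestronglyMeasurable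
    · have hmeas : MeasurableSet (Set.uIoc a d) := measurableSet_uIoc
      filter_upwards [ae_restrict_mem hmeas] with x hx
      have h1 : |b x| ≤ M := hM x (uIoc_subset_uIcc hx)
      have : ‖2 * b x‖ = 2 * |b x| := by
        rw [Real.norm_eq_abs, abs_mul]; norm_num
      rw [this]; linarith
  -- the integrand of `u` is continuous
  have hIcont : Continuous fun y : ℝ => ∫ z in (0:ℝ)..y, 2 * b z :=
    intervalIntegral.continuous_primitive hbint 0
  have hecont : Continuous fun y : ℝ => Real.exp (-∫ z in (0:ℝ)..y, 2 * b z) :=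
    Real.continuous_exp.comp hIcont.neg
  -- `u x - u (x - c)` as an interval integral
  have hudiff : ∀ x : ℝ,
      u x - u (x - c) = ∫ y in (x - c)..x, Real.exp (-∫ z in (0:ℝ)..y, 2 * b z) := by
    intro x
    have h := intervalIntegral.integral_add_adjacent_intervals
      (hecont.intervalIntegrable (μ := volume) 0 (x - c))
      (hecont.intervalIntegrable (μ := volume) (x - c) x)
    rw [hu x, hu (x - c)]; linarith
  -- choose the threshold from the limsup hypothesis
  set ε : ℝ := 1 / (4 * c) with hε_def
  have hε : (0:ℝ) < ε := by positivity
  have hev : ∀ᶠ x in atTop, ((b x / Real.log x : ℝ) : EReal) < (ε : EReal) := by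
    apply Filter.eventually_lt_of_limsup_lt
    · rw [hlimsup]
      exact_mod_cast EReal.coe_pos.mpr hε
    · isBoundedDefault
  obtain ⟨x₀, hx₀⟩ := eventually_atTop.mp hev
  set B : ℝ := max x₀ 3 with hB_def
  have hB3 : (3:ℝ) ≤ B := le_max_right _ _
  have hblog : ∀ z : ℝ, B ≤ z → b z ≤ ε * Real.log z := by
    intro z hz
    have h3 : (3:ℝ) ≤ z := hB3.trans hz
    have hlogpos : 0 < Real.log z := Real.log_pos (by linarith)
    have h := hx₀ z ((le_max_left _ _).trans hz)
    rw [EReal.coe_lt_coe_iff] at h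
    have := (div_lt_iff₀ hlogpos).mp h
    linarith
  set A : ℝ := B + c with hA_def
  -- key pointwise lower bound on `Ici A`
  have hkey : ∀ x ∈ Ici A,
      (1 / c) * Real.exp (-(2⁻¹) * Real.log x)
        ≤ Real.exp (-∫ y in (0:ℝ)..x, 2 * b y) / (u x - u (x - c)) := by
    intro x hx
    rw [mem_Ici] at hx
    have hxc : B ≤ x - c := by rw [hA_def] at hx; linarith
    have hx3 : (3:ℝ) ≤ x := by linarith
    have hlogx : 0 < Real.log x := Real.log_pos (by linarith)
    -- for every `y ∈ [x - c, x]`, bound the integrand from above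
    have hbd : ∀ y ∈ Icc (x - c) x,
        Real.exp (-∫ z in (0:ℝ)..y, 2 * b z)
          ≤ Real.exp (-∫ z in (0:ℝ)..x, 2 * b z) * Real.exp (2⁻¹ * Real.log x) := by
      intro y hy
      obtain ⟨hy1, hy2⟩ := hy
      -- `∫ y..x 2b ≤ (x - y) * (2 ε log x) ≤ (1/2) log x`
      have hsplit : (∫ z in (0:ℝ)..x, 2 * b z)
          = (∫ z in (0:ℝ)..y, 2 * b z) + ∫ z in y..x, 2 * b z :=
        (intervalIntegral.integral_add_adjacent_intervals (hbint 0 y) (hbint y x)).symm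
      have hmono : (∫ z in y..x, 2 * b z) ≤ ∫ z in y..x, 2 * ε * Real.log x := by
        apply intervalIntegral.integral_mono_on hy2 (hbint y x)
          (intervalIntegrable_const)
        intro z hz
        have hBz : B ≤ z := hxc.trans (hy1.trans hz.1)
        have hz3 : (3:ℝ) ≤ z := hB3.trans hBz
        have hbz := hblog z hBz
        have hlogz : Real.log z ≤ Real.log x := Real.log_le_log (by linarith) hz.2
        have hlogz0 : 0 < Real.log z := Real.log_pos (by linarith)
        nlinarith
      have hconst : (∫ z in y..x, 2 * ε * Real.log x) = (x - y) * (2 * ε * Real.log x) := by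
        rw [intervalIntegral.integral_const]; simp [smul_eq_mul]
      have hxy : x - y ≤ c := by linarith
      have hεc : 2 * ε * c = 2⁻¹ := by
        rw [hε_def]; field_simp; ring
      have hint_le : (∫ z in y..x, 2 * b z) ≤ 2⁻¹ * Real.log x := by
        rw [hconst] at hmono
        have h1 : (x - y) * (2 * ε * Real.log x) ≤ c * (2 * ε * Real.log x) := by
          apply mul_le_mul_of_nonneg_right hxy
          positivity
        have h2 : c * (2 * ε * Real.log x) = 2⁻¹ * Real.log x := by
          rw [← hεc]; ring
        linarith
      rw [← Real.exp_add]
      apply Real.exp_le_exp.mpr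
      rw [hsplit]
      linarith
    -- hence the denominator is at most `c * exp(-I x) * exp((1/2) log x)`
    have hD : u x - u (x - c)
        ≤ c * (Real.exp (-∫ z in (0:ℝ)..x, 2 * b z) * Real.exp (2⁻¹ * Real.log x)) := by
      rw [hudiff x]
      have := intervalIntegral.integral_mono_on (by linarith : x - c ≤ x)
        (hecont.intervalIntegrable (μ := volume) (x - c) x) (intervalIntegrable_const) hbd
      rw [intervalIntegral.integral_const] at this
      simp only [smul_eq_mul] at this
      calc (∫ y in (x - c)..x, Real.exp (-∫ z in (0:ℝ)..y, 2 * b z))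
          ≤ (x - (x - c)) * (Real.exp (-∫ z in (0:ℝ)..x, 2 * b z)
              * Real.exp (2⁻¹ * Real.log x)) := this
        _ = c * (Real.exp (-∫ z in (0:ℝ)..x, 2 * b z) * Real.exp (2⁻¹ * Real.log x)) := by
            ring
    -- the denominator is positive
    have hDpos : 0 < u x - u (x - c) := by
      rw [hudiff x]
      exact intervalIntegral_pos_of_pos (hecont.intervalIntegrable (x - c) x)
        (fun y => Real.exp_pos _) (by linarith)
    rw [le_div_iff₀ hDpos]
    calc (1 / c) * Real.exp (-(2⁻¹) * Real.log x) * (u x - u (x - c))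
        ≤ (1 / c) * Real.exp (-(2⁻¹) * Real.log x)
            * (c * (Real.exp (-∫ z in (0:ℝ)..x, 2 * b z) * Real.exp (2⁻¹ * Real.log x))) := by
          apply mul_le_mul_of_nonneg_left hD
          positivity
      _ = Real.exp (-(2⁻¹) * Real.log x) * Real.exp (2⁻¹ * Real.log x)
            * Real.exp (-∫ z in (0:ℝ)..x, 2 * b z) := by
          field_simp
      _ = Real.exp (-∫ z in (0:ℝ)..x, 2 * b z) := by
          rw [← Real.exp_add]
          norm_num
  -- the comparison function has infinite integral on `Ici A`
  have hA3 : (3:ℝ) ≤ A := by rw [hA_def]; linarith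
  have hApos : (0:ℝ) < A := by linarith
  have hlow : ∫⁻ x in Ici A,
      ENNReal.ofReal ((1 / c) * Real.exp (-(2⁻¹) * Real.log x)) = ⊤ := by
    rw [← setLIntegral_congr (Ioi_ae_eq_Ici (a := A))]
    by_contra h
    have hne : ∫⁻ x in Ioi A,
        ENNReal.ofReal ((1 / c) * Real.exp (-(2⁻¹) * Real.log x)) ≠ ⊤ := h
    have hmeas : AEStronglyMeasurable
        (fun x : ℝ => (1 / c) * Real.exp (-(2⁻¹) * Real.log x))
        (volume.restrict (Ioi A)) := by
      exact (((Real.measurable_log.const_mul (-(2⁻¹))).exp).const_mul (1/c)).aestronglyMeasurable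
    have hnn : 0 ≤ᵐ[volume.restrict (Ioi A)]
        fun x : ℝ => (1 / c) * Real.exp (-(2⁻¹) * Real.log x) := by
      filter_upwards with x
      positivity
    have hint : Integrable (fun x : ℝ => (1 / c) * Real.exp (-(2⁻¹) * Real.log x))
        (volume.restrict (Ioi A)) :=
      (lintegral_ofReal_ne_top_iff_integrable hmeas hnn).mp hne
    -- this function equals `(1/c) * x ^ (-(1/2))` on `Ioi A`
    have heq : EqOn (fun x : ℝ => (1 / c) * Real.exp (-(2⁻¹) * Real.log x))
        (fun x : ℝ => (1 / c) * x ^ (-(2⁻¹) : ℝ)) (Ioi A) := by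
      intro x hx
      have hx0 : 0 < x := hApos.trans hx
      simp only
      rw [Real.rpow_def_of_pos hx0, mul_comm (Real.log x)]
    have hint' : IntegrableOn (fun x : ℝ => (1 / c) * Real.exp (-(2⁻¹) * Real.log x))
        (Ioi A) volume := hint
    have hint2 : IntegrableOn (fun x : ℝ => (1 / c) * x ^ (-(2⁻¹) : ℝ)) (Ioi A) volume :=
      hint'.congr_fun heq measurableSet_Ioi
    have hint3 : IntegrableOn (fun x : ℝ => x ^ (-(2⁻¹) : ℝ)) (Ioi A) volume := by
      have h4 : IntegrableOn (fun x : ℝ => c * ((1 / c) * x ^ (-(2⁻¹) : ℝ))) (Ioi A) volume :=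
        hint2.const_mul c
      apply h4.congr_fun _ measurableSet_Ioi
      intro x _
      simp only
      field_simp
    rw [integrableOn_Ioi_rpow_iff hApos] at hint3
    norm_num at hint3
  -- put everything together
  refine top_le_iff.mp ?_
  calc (⊤ : ENNReal) = ∫⁻ x in Ici A,
        ENNReal.ofReal ((1 / c) * Real.exp (-(2⁻¹) * Real.log x)) := hlow.symm
    _ ≤ ∫⁻ x in Ici A, ENNReal.ofReal
          (Real.exp (-∫ y in (0:ℝ)..x, 2 * b y) / (u x - u (x - c))) := by
        apply setLIntegral_mono' measurableSet_Ici
        intro x hx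
        exact ENNReal.ofReal_le_ofReal (hkey x hx)
    _ ≤ ∫⁻ x in Ici (3:ℝ), ENNReal.ofReal
          (Real.exp (-∫ y in (0:ℝ)..x, 2 * b y) / (u x - u (x - c))) :=
        lintegral_mono_set (Ici_subset_Ici.mpr hA3)
end
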